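/- arXiv:2003.09554 — 8 statements merged into one kernel-verified Lean document; each statement's English description precedes it below -/
import Mathlib

section
/- Let f : Fin m → [0,1] and let π be a permutation of Fin m. Define M : Fin m → ℝ by processing points in the order π(1), π(2), ..., π(m) and setting M(π(i)) = median{f(π(i)), L_i, H_i}, where H_i is the value M(π(j)) at the smallest point π(j) > π(i) among indices j < i (or +∞ if none exists), and L_i is the value M(π(j)) at the largest point π(j) < π(i) among indices j < i (or -∞ if none exists). Then M is monotone: for all x ≤ y in Fin m, M(x) ≤ M(y). -/
open Finset

/-- One step of the greedy monotonization: assign a value at point `p`,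
clamping `f p` between the previously assigned value at the largest assigned
point below `p` (`L`, or `-∞` if none) and the previously assigned value at the
smallest assigned point above `p` (`H`, or `+∞` if none); i.e. the median of
`{f p, L, H}`. -/
noncomputable def greedyStep {m : ℕ} (f : Fin m → ℝ) (s : Fin m → Option ℝ) (p : Fin m) :
    Fin m → Option ℝ :=
  let B := Finset.univ.filter (fun y => y < p ∧ (s y).isSome)
  let A := Finset.univ.filter (fun y => p < y ∧ (s y).isSome)
  let L : Option ℝ := if h : B.Nonempty then s (B.max' h) else none
  let H : Option ℝ := if h : A.Nonempty then s (A.min' h) else none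
  let v1 : ℝ :=
    match H with
    | some hv => min (f p) hv
    | none => f p
  let v2 : ℝ :=
    match L with
    | some lv => max v1 lv
    | none => v1
  fun y => if y = p then some v2 else s y

/-- State of the greedy monotonization after processing the first `n` points
`π 0, π 1, …, π (n-1)` of the permutation `π`. -/
noncomputable def greedyState {m : ℕ} (f : Fin m → ℝ) (π : Equiv.Perm (Fin m)) :
    ℕ → Fin m → Option ℝ
  | 0 => fun _ => none
  | n + 1 =>
    if h : n < m then greedyStep f (greedyState f π n) (π ⟨n, h⟩)
    else greedyState f π n

/-- The greedy monotonization `M^π_f` of `f` along the permutation `π`. -/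
noncomputable def greedyMono {m : ℕ} (f : Fin m → ℝ) (π : Equiv.Perm (Fin m)) (x : Fin m) : ℝ :=
  (greedyState f π m x).getD 0

noncomputable def theL {m : ℕ} (s : Fin m → Option ℝ) (p : Fin m) : Option ℝ :=
  if h : (Finset.univ.filter (fun y => y < p ∧ (s y).isSome)).Nonempty then
    s ((Finset.univ.filter (fun y => y < p ∧ (s y).isSome)).max' h) else none

noncomputable def theH {m : ℕ} (s : Fin m → Option ℝ) (p : Fin m) : Option ℝ :=
  if h : (Finset.univ.filter (fun y => p < y ∧ (s y).isSome)).Nonempty then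
    s ((Finset.univ.filter (fun y => p < y ∧ (s y).isSome)).min' h) else none

noncomputable def myV {m : ℕ} (f : Fin m → ℝ) (s : Fin m → Option ℝ) (p : Fin m) : ℝ :=
  match theL s p with
  | some lv => max (match theH s p with | some hv => min (f p) hv | none => f p) lv
  | none => (match theH s p with | some hv => min (f p) hv | none => f p)

lemma greedyStep_eq {m : ℕ} (f : Fin m → ℝ) (s : Fin m → Option ℝ) (p : Fin m) :
    greedyStep f s p = fun y => if y = p then some (myV f s p) else s y := rfl

def Sorted {m : ℕ} (s : Fin m → Option ℝ) : Prop :=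
  ∀ x y : Fin m, x < y → ∀ a ∈ s x, ∀ b ∈ s y, a ≤ b

lemma key_lo {m : ℕ} (f : Fin m → ℝ) (s : Fin m → Option ℝ) (p : Fin m)
    (hs : Sorted s) (x : Fin m) (hx : x < p) (a : ℝ) (ha : a ∈ s x) : a ≤ myV f s p := by
  classical
  set B := Finset.univ.filter (fun y => y < p ∧ (s y).isSome) with hB
  have hxB : x ∈ B := by
    simp only [hB, mem_filter, mem_univ, true_and]
    exact ⟨hx, Option.isSome_iff_exists.mpr ⟨a, Option.mem_def.mp ha⟩⟩
  have hBne : B.Nonempty := ⟨x, hxB⟩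
  obtain ⟨-, hmem1, hmem2⟩ := Finset.mem_filter.mp (B.max'_mem hBne)
  obtain ⟨lv, hlv⟩ := Option.isSome_iff_exists.mp hmem2
  have hLs : theL s p = some lv := by rw [theL, dif_pos hBne]; exact hlv
  have halv : a ≤ lv := by
    rcases lt_or_eq_of_le (B.le_max' x hxB) with h | h
    · exact hs x _ h a ha lv hlv
    · rw [← h] at hlv
      exact le_of_eq (Option.some_injective _ ((Option.mem_def.mp ha).symm.trans hlv))
  calc a ≤ lv := halv
    _ ≤ myV f s p := by rw [myV, hLs]; exact le_max_right _ _

lemma key_hi {m : ℕ} (f : Fin m → ℝ) (s : Fin m → Option ℝ) (p : Fin m)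
    (hs : Sorted s) (y : Fin m) (hy : p < y) (b : ℝ) (hb : b ∈ s y) : myV f s p ≤ b := by
  classical
  set A := Finset.univ.filter (fun z => p < z ∧ (s z).isSome) with hA
  have hyA : y ∈ A := by
    simp only [hA, mem_filter, mem_univ, true_and]
    exact ⟨hy, Option.isSome_iff_exists.mpr ⟨b, Option.mem_def.mp hb⟩⟩
  have hAne : A.Nonempty := ⟨y, hyA⟩
  obtain ⟨-, hmem1, hmem2⟩ := Finset.mem_filter.mp (A.min'_mem hAne)
  obtain ⟨hv, hhv⟩ := Option.isSome_iff_exists.mp hmem2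
  have hHs : theH s p = some hv := by rw [theH, dif_pos hAne]; exact hhv
  have hhvb : hv ≤ b := by
    rcases lt_or_eq_of_le (A.min'_le y hyA) with h | h
    · exact hs _ y h hv hhv b hb
    · rw [h] at hhv
      exact le_of_eq (Option.some_injective _ (hhv.symm.trans (Option.mem_def.mp hb)))
  refine le_trans ?_ hhvb
  rcases hLdef : theL s p with _ | lv
  · rw [myV, hLdef, hHs]; exact min_le_right _ _
  · rw [myV, hLdef, hHs]
    refine max_le (min_le_right _ _) ?_
    -- lv ≤ hv
    rw [theL] at hLdef
    by_cases hBne : (Finset.univ.filter (fun y => y < p ∧ (s y).isSome)).Nonempty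
    · rw [dif_pos hBne] at hLdef
      have hmemB := Finset.max'_mem _ hBne
      rw [mem_filter] at hmemB
      exact hs _ _ (lt_trans hmemB.2.1 hmem1) lv hLdef hv hhv
    · rw [dif_neg hBne] at hLdef; exact absurd hLdef (by simp)

lemma greedyStep_sorted {m : ℕ} (f : Fin m → ℝ) (s : Fin m → Option ℝ) (p : Fin m)
    (hs : Sorted s) : Sorted (greedyStep f s p) := by
  intro x y hxy a ha b hb
  rw [greedyStep_eq] at ha hb
  simp only at ha hb
  by_cases hx : x = p
  · rw [if_pos hx] at ha
    rw [hx] at hxy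
    rw [if_neg (ne_of_gt hxy)] at hb
    have hav : a = myV f s p := (Option.some_injective _ (Option.mem_def.mp ha)).symm
    rw [hav]
    exact key_hi f s p hs y hxy b hb
  · rw [if_neg hx] at ha
    by_cases hy : y = p
    · rw [if_pos hy] at hb
      rw [hy] at hxy
      have hbv : b = myV f s p := (Option.some_injective _ (Option.mem_def.mp hb)).symm
      rw [hbv]
      exact key_lo f s p hs x hxy a ha
    · rw [if_neg hy] at hb
      exact hs x y hxy a ha b hb

lemma greedyState_sorted {m : ℕ} (f : Fin m → ℝ) (π : Equiv.Perm (Fin m)) (n : ℕ) :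
    Sorted (greedyState f π n) := by
  induction n with
  | zero => intro x y _ a ha; simp [greedyState] at ha
  | succ n ih =>
    rw [greedyState]
    by_cases h : n < m
    · rw [dif_pos h]; exact greedyStep_sorted f _ _ ih
    · rw [dif_neg h]; exact ih

lemma greedyState_isSome {m : ℕ} (f : Fin m → ℝ) (π : Equiv.Perm (Fin m)) (n : ℕ) :
    ∀ i : Fin m, (i : ℕ) < n → (greedyState f π n (π i)).isSome := by
  induction n with
  | zero => intro i hi; omega
  | succ n ih =>
    intro i hi
    rw [greedyState]
    by_cases h : n < m
    · rw [dif_pos h, greedyStep_eq]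
      simp only
      by_cases hip : π i = π ⟨n, h⟩
      · rw [if_pos hip]; simp
      · rw [if_neg hip]
        apply ih
        have : i ≠ ⟨n, h⟩ := fun he => hip (by rw [he])
        have : (i : ℕ) ≠ n := fun he => this (Fin.ext he)
        omega
    · rw [dif_neg h]
      exact ih i (by omega)

/-- the greedy monotonization of any `f : Fin m → [0,1]` along any
permutation `π` is monotone. -/
theorem stmt0 {m : ℕ} (f : Fin m → ℝ) (hf : ∀ x, f x ∈ Set.Icc (0:ℝ) 1)
    (π : Equiv.Perm (Fin m)) : Monotone (greedyMono f π) := by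
  intro x y hxy
  rcases eq_or_lt_of_le hxy with h | h
  · rw [h]
  · have hx := greedyState_isSome f π m (π.symm x) (π.symm x).isLt
    have hy := greedyState_isSome f π m (π.symm y) (π.symm y).isLt
    rw [Equiv.apply_symm_apply] at hx hy
    obtain ⟨a, ha⟩ := Option.isSome_iff_exists.mp hx
    obtain ⟨b, hb⟩ := Option.isSome_iff_exists.mp hy
    have := greedyState_sorted f π m x y h a ha b hb
    simpa [greedyMono, ha, hb] using this
end

section
/- Let f : Fin m → [0,1] and let π be a permutation of Fin m. Let M be the greedy monotonization of f along π (as in the greedy median construction). Then M is feasible: for every x ∈ Fin m, M(x) ≤ max_{y ≤ x} f(y). -/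
open Finset

lemma supIic_mono {m : ℕ} (f : Fin m → ℝ) {z y : Fin m} (hzy : z ≤ y) :
    (Finset.Iic z).sup' ⟨z, Finset.mem_Iic.2 le_rfl⟩ f ≤
      (Finset.Iic y).sup' ⟨y, Finset.mem_Iic.2 le_rfl⟩ f := by
  apply Finset.sup'_le
  intro b hb
  exact Finset.le_sup' f (Finset.mem_Iic.2 (le_trans (Finset.mem_Iic.1 hb) hzy))

lemma step_inv {m : ℕ} (f : Fin m → ℝ) (s : Fin m → Option ℝ) (p : Fin m)
    (IH : ∀ z w, s z = some w → w ≤ (Finset.Iic z).sup' ⟨z, Finset.mem_Iic.2 le_rfl⟩ f)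
    (y : Fin m) (v : ℝ) (h : greedyStep f s p y = some v) :
    v ≤ (Finset.Iic y).sup' ⟨y, Finset.mem_Iic.2 le_rfl⟩ f := by
  unfold greedyStep at h
  
  by_cases hyp : y = p
  · subst hyp
    rw [if_pos rfl, Option.some_inj] at h
    subst h
    have hfp : f y ≤ (Finset.Iic y).sup' ⟨y, Finset.mem_Iic.2 le_rfl⟩ f :=
      Finset.le_sup' f (Finset.mem_Iic.2 le_rfl)
    have hv1 : (match (if h : (Finset.univ.filter (fun z => y < z ∧ (s z).isSome)).Nonempty
          then s ((Finset.univ.filter (fun z => y < z ∧ (s z).isSome)).min' h) else none) with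
        | some hv => min (f y) hv
        | none => f y) ≤ f y := by
      split
      · exact min_le_left _ _
      · exact le_refl _
    set v1 := (match (if h : (Finset.univ.filter (fun z => y < z ∧ (s z).isSome)).Nonempty
          then s ((Finset.univ.filter (fun z => y < z ∧ (s z).isSome)).min' h) else none) with
        | some hv => min (f y) hv
        | none => f y) with hv1def
    by_cases hB : (Finset.univ.filter (fun z => z < y ∧ (s z).isSome)).Nonempty
    · rw [dif_pos hB]
      set b := (Finset.univ.filter (fun z => z < y ∧ (s z).isSome)).max' hB with hbdef
      have hbmem := (Finset.univ.filter (fun z => z < y ∧ (s z).isSome)).max'_mem hB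
      rw [Finset.mem_filter] at hbmem
      obtain ⟨-, hblt, hbsome⟩ := hbmem
      obtain ⟨w, hw⟩ := Option.isSome_iff_exists.1 hbsome
      rw [hw]
      have hwle : w ≤ (Finset.Iic y).sup' ⟨y, Finset.mem_Iic.2 le_rfl⟩ f :=
        le_trans (IH b w hw) (supIic_mono f hblt.le)
      exact max_le (le_trans hv1 hfp) hwle
    · rw [dif_neg hB]
      exact le_trans hv1 hfp
  · rw [if_neg hyp] at h
    exact IH y v h

lemma state_inv {m : ℕ} (f : Fin m → ℝ) (π : Equiv.Perm (Fin m)) :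
    ∀ n (y : Fin m) (v : ℝ), greedyState f π n y = some v →
      v ≤ (Finset.Iic y).sup' ⟨y, Finset.mem_Iic.2 le_rfl⟩ f := by
  intro n
  induction n with
  | zero => intro y v h; simp [greedyState] at h
  | succ n ih =>
    intro y v h
    rw [greedyState] at h
    split at h
    · exact step_inv f _ _ ih y v h
    · exact ih y v h

/-- the greedy monotonization is feasible: at every point `x` its
value is at most `max_{y ≤ x} f y`. -/
theorem stmt1 {m : ℕ} (f : Fin m → ℝ) (hf : ∀ x, f x ∈ Set.Icc (0:ℝ) 1)
    (π : Equiv.Perm (Fin m)) (x : Fin m) :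
    greedyMono f π x ≤ (Finset.Iic x).sup' ⟨x, Finset.mem_Iic.2 le_rfl⟩ f := by
  unfold greedyMono
  cases h : greedyState f π m x with
  | none =>
    simp only [Option.getD_none]
    exact le_trans (hf x).1 (Finset.le_sup' f (Finset.mem_Iic.2 le_rfl))
  | some v =>
    simp only [Option.getD_some]
    exact state_inv f π m x v h
end

section
/- Let f : Fin m → {0,1} and let π be a uniformly random permutation of Fin m. Let M^π be the greedy monotonization of f along π. Then the expectation over the uniform random point x and the random permutation π satisfies E_{π, x}[M^π(x)] = E_x[f(x)], where x is uniform on Fin m. -/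
open Finset

section Aux
variable {m : ℕ}

def oMin (x : ℝ) : Option ℝ → ℝ
  | some h => min x h
  | none => x

def oMax (x : ℝ) : Option ℝ → ℝ
  | some l => max x l
  | none => x

noncomputable def Hval (s : Fin m → Option ℝ) (p : Fin m) : Option ℝ :=
  if h : (Finset.univ.filter (fun y => p < y ∧ (s y).isSome)).Nonempty
  then s ((Finset.univ.filter (fun y => p < y ∧ (s y).isSome)).min' h) else none

noncomputable def Lval (s : Fin m → Option ℝ) (p : Fin m) : Option ℝ :=
  if h : (Finset.univ.filter (fun y => y < p ∧ (s y).isSome)).Nonempty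
  then s ((Finset.univ.filter (fun y => y < p ∧ (s y).isSome)).max' h) else none

noncomputable def stepV (f : Fin m → ℝ) (s : Fin m → Option ℝ) (p : Fin m) : ℝ :=
  oMax (oMin (f p) (Hval s p)) (Lval s p)

lemma greedyStep_apply_ne (f : Fin m → ℝ) (s : Fin m → Option ℝ) (p x : Fin m) (h : x ≠ p) :
    greedyStep f s p x = s x := by
  simp only [greedyStep]
  exact if_neg h

lemma greedyStep_apply_self (f : Fin m → ℝ) (s : Fin m → Option ℝ) (p : Fin m) :
    greedyStep f s p p = some (stepV f s p) := by
  simp only [greedyStep, stepV]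
  rw [if_pos trivial]
  rcases hH : Hval s p with _ | hv <;> rcases hL : Lval s p with _ | lv <;>
    simp only [Hval, Lval] at hH hL <;> rw [hH, hL] <;> simp [oMin, oMax]

lemma greedyState_succ (f : Fin m → ℝ) (π : Equiv.Perm (Fin m)) {t : ℕ} (h : t < m) :
    greedyState f π (t + 1) = greedyStep f (greedyState f π t) (π ⟨t, h⟩) := by
  rw [greedyState, dif_pos h]

lemma isSome_greedyState_iff (f : Fin m → ℝ) (π : Equiv.Perm (Fin m)) :
    ∀ {t : ℕ}, t ≤ m → ∀ x, (greedyState f π t x).isSome ↔ (π.symm x : ℕ) < t := by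
  intro t
  induction t with
  | zero => intro _ x; simp [greedyState]
  | succ t ih =>
    intro ht x
    have htm : t < m := ht
    rw [greedyState_succ f π htm]
    by_cases hx : x = π ⟨t, htm⟩
    · subst hx
      rw [greedyStep_apply_self]
      simp only [Equiv.symm_apply_apply, Option.isSome_some]
      simpa using Nat.lt_succ_of_le le_rfl
    · rw [greedyStep_apply_ne _ _ _ _ hx, ih (le_of_lt htm) x]
      constructor
      · omega
      · intro h
        have hne : (π.symm x : ℕ) ≠ t := by
          intro hc
          have h2 : π.symm x = ⟨t, htm⟩ := Fin.ext hc
          exact hx (by rw [← h2, Equiv.apply_symm_apply])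
        omega

lemma greedyState_stable (f : Fin m → ℝ) (π : Equiv.Perm (Fin m)) {t t' : ℕ} (h : t ≤ t')
    (ht' : t' ≤ m) {x : Fin m} {v : ℝ} (hx : greedyState f π t x = some v) :
    greedyState f π t' x = some v := by
  induction t', h using Nat.le_induction with
  | base => exact hx
  | succ t' ht ih =>
    have htm : t' < m := ht'
    have hprev : greedyState f π t' x = some v := ih (le_of_lt htm)
    rw [greedyState_succ f π htm]
    have hxne : x ≠ π ⟨t', htm⟩ := by
      intro hc
      have hs : (greedyState f π t' x).isSome := by rw [hprev]; rfl
      rw [isSome_greedyState_iff f π (le_of_lt htm) x, hc, Equiv.symm_apply_apply] at hs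
      simp at hs
    rw [greedyStep_apply_ne _ _ _ _ hxne]
    exact hprev

lemma greedyMono_eq (f : Fin m → ℝ) (π : Equiv.Perm (Fin m)) {t : ℕ} {x : Fin m} {v : ℝ}
    (ht : t ≤ m) (hx : greedyState f π t x = some v) : greedyMono f π x = v := by
  rw [greedyMono, greedyState_stable f π ht le_rfl hx]
  rfl

lemma bool_min {a b : ℝ} (ha : a = 0 ∨ a = 1) (hb : b = 0 ∨ b = 1) :
    min a b = 0 ∨ min a b = 1 := by
  rcases ha with h | h <;> rcases hb with h' | h' <;> rw [h, h'] <;> norm_num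

lemma bool_max {a b : ℝ} (ha : a = 0 ∨ a = 1) (hb : b = 0 ∨ b = 1) :
    max a b = 0 ∨ max a b = 1 := by
  rcases ha with h | h <;> rcases hb with h' | h' <;> rw [h, h'] <;> norm_num

lemma stepV_boolean {f : Fin m → ℝ} {s : Fin m → Option ℝ} {p : Fin m}
    (hf : f p = 0 ∨ f p = 1) (hs : ∀ q v, s q = some v → v = 0 ∨ v = 1) :
    stepV f s p = 0 ∨ stepV f s p = 1 := by
  have hH : ∀ v, Hval s p = some v → v = 0 ∨ v = 1 := by
    intro v hv
    rw [Hval] at hv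
    split at hv
    · exact hs _ _ hv
    · cases hv
  have hL : ∀ v, Lval s p = some v → v = 0 ∨ v = 1 := by
    intro v hv
    rw [Lval] at hv
    split at hv
    · exact hs _ _ hv
    · cases hv
  rcases hHv : Hval s p with _ | hv <;> rcases hLv : Lval s p with _ | lv <;>
    simp only [stepV, hHv, hLv, oMin, oMax]
  · exact hf
  · exact bool_max hf (hL _ hLv)
  · exact bool_min hf (hH _ hHv)
  · exact bool_max (bool_min hf (hH _ hHv)) (hL _ hLv)

lemma greedyState_boolean {f : Fin m → ℝ} (π : Equiv.Perm (Fin m))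
    (hf : ∀ x, f x = 0 ∨ f x = 1) :
    ∀ (t : ℕ) (x : Fin m) (v : ℝ), greedyState f π t x = some v → v = 0 ∨ v = 1 := by
  intro t
  induction t with
  | zero => intro x v hv; simp [greedyState] at hv
  | succ t ih =>
    intro x v hv
    rw [greedyState] at hv
    split at hv
    · rename_i h
      by_cases hx : x = π ⟨t, h⟩
      · subst hx
        rw [greedyStep_apply_self] at hv
        cases hv
        exact stepV_boolean (hf _) (fun q w hw => ih q w hw)
      · rw [greedyStep_apply_ne _ _ _ _ hx] at hv
        exact ih _ _ hv
    · exact ih _ _ hv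

end Aux


section SubPerm
variable {n b : ℕ}

def PartialInv (g : Fin n → Option (Fin b)) (q : Fin b → Fin n) : Prop :=
  (∀ j, g (q j) = some j) ∧ (∀ i j, g i = some j → q j = i)

lemma PartialInv.q_injective {g : Fin n → Option (Fin b)} {q : Fin b → Fin n}
    (h : PartialInv g q) : Function.Injective q := by
  intro j j' hjj
  have h1 := h.1 j
  rw [hjj, h.1 j'] at h1
  exact (Option.some_inj.mp h1).symm

lemma PartialInv.card_dom {g : Fin n → Option (Fin b)} {q : Fin b → Fin n} (h : PartialInv g q) :
    (univ.filter fun i => (g i).isSome).card = b := by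
  have he : (univ.filter fun i => (g i).isSome) = univ.image q := by
    ext i
    simp only [mem_filter, mem_univ, true_and, mem_image]
    constructor
    · intro hi
      rcases Option.isSome_iff_exists.mp hi with ⟨j, hj⟩
      exact ⟨j, h.2 i j hj⟩
    · rintro ⟨j, rfl⟩
      rw [h.1 j]; rfl
  rw [he, card_image_of_injective _ h.q_injective, card_univ, Fintype.card_fin]

def posSet (g : Fin n → Option (Fin b)) (e : Equiv.Perm (Fin n)) : Finset (Fin n) :=
  univ.filter fun i => (g (e i)).isSome

lemma mem_posSet {g : Fin n → Option (Fin b)} {e : Equiv.Perm (Fin n)} {i : Fin n} :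
    i ∈ posSet g e ↔ (g (e i)).isSome := by simp [posSet]

lemma card_posSet {g : Fin n → Option (Fin b)} {q : Fin b → Fin n} (h : PartialInv g q)
    (e : Equiv.Perm (Fin n)) : (posSet g e).card = b := by
  have he : posSet g e = (univ.filter fun i => (g i).isSome).image e.symm := by
    ext i
    simp only [posSet, mem_filter, mem_univ, true_and, mem_image]
    constructor
    · intro hi
      exact ⟨e i, hi, e.symm_apply_apply i⟩
    · rintro ⟨i', hi', rfl⟩
      rwa [e.apply_symm_apply]
  rw [he, card_image_of_injective _ e.symm.injective, h.card_dom]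

lemma orderIsoOfFin_rank {α : Type*} [LinearOrder α] (s : Finset α) {k : ℕ} (h : s.card = k)
    {a : α} (ha : a ∈ s) :
    ∃ hr : (s.filter (· < a)).card < k,
      ((s.orderIsoOfFin h) ⟨(s.filter (· < a)).card, hr⟩ : α) = a := by
  set w := s.orderIsoOfFin h with hw
  set j := w.symm ⟨a, ha⟩ with hj
  have key : s.filter (· < a) = (univ.filter (· < j)).image (fun i => (w i : α)) := by
    ext x
    simp only [mem_filter, mem_image, mem_univ, true_and]
    constructor
    · rintro ⟨hxs, hxa⟩
      refine ⟨w.symm ⟨x, hxs⟩, ?_, by simp⟩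
      rw [← w.lt_iff_lt, w.apply_symm_apply, w.apply_symm_apply]
      exact Subtype.mk_lt_mk.mpr hxa
    · rintro ⟨i, hij, rfl⟩
      refine ⟨(w i).2, ?_⟩
      have : w i < w j := w.lt_iff_lt.mpr hij
      rw [hj, w.apply_symm_apply] at this
      exact this
  have hcard : (s.filter (· < a)).card = (j : ℕ) := by
    rw [key, card_image_of_injective _ (show Function.Injective (fun i => ((w i : α))) from fun i i' hii => w.injective (Subtype.coe_injective hii))]
    have : (univ.filter (· < j) : Finset (Fin k)) = Finset.Iio j := by
      ext x; simp
    rw [this, Fin.card_Iio]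
  have hr : (s.filter (· < a)).card < k := by rw [hcard]; exact j.isLt
  refine ⟨hr, ?_⟩
  have : (⟨(s.filter (· < a)).card, hr⟩ : Fin k) = j := Fin.ext hcard
  rw [this, hj, w.apply_symm_apply]

noncomputable def subPerm {g : Fin n → Option (Fin b)} {q : Fin b → Fin n} (h : PartialInv g q)
    (e : Equiv.Perm (Fin n)) : Equiv.Perm (Fin b) :=
  Equiv.ofBijective
    (fun k => (g (e ((posSet g e).orderIsoOfFin (card_posSet h e) k))).getD k)
    (by
      rw [← Finite.injective_iff_bijective]
      intro k k' hkk
      set w := (posSet g e).orderIsoOfFin (card_posSet h e)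
      have h1 : (g (e (w k))).isSome := mem_posSet.mp (w k).2
      have h2 : (g (e (w k'))).isSome := mem_posSet.mp (w k').2
      rcases Option.isSome_iff_exists.mp h1 with ⟨j1, hj1⟩
      rcases Option.isSome_iff_exists.mp h2 with ⟨j2, hj2⟩
      simp only [hj1, hj2, Option.getD_some] at hkk
      subst hkk
      have h3 : e (w k) = e (w k') := (h.2 _ _ hj1).symm.trans (h.2 _ _ hj2)
      exact w.injective (Subtype.coe_injective (e.injective h3)))

lemma subPerm_spec {g : Fin n → Option (Fin b)} {q : Fin b → Fin n} (h : PartialInv g q)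
    (e : Equiv.Perm (Fin n)) (k : Fin b) :
    g (e ((posSet g e).orderIsoOfFin (card_posSet h e) k)) = some (subPerm h e k) := by
  set w := (posSet g e).orderIsoOfFin (card_posSet h e)
  have h1 : (g (e (w k))).isSome := mem_posSet.mp (w k).2
  rcases Option.isSome_iff_exists.mp h1 with ⟨j1, hj1⟩
  rw [hj1]
  congr 1
  show j1 = (g (e (w k))).getD k
  rw [hj1]; rfl

end SubPerm

section Count
variable {n b : ℕ} {g : Fin n → Option (Fin b)} {q : Fin b → Fin n}

def domEquiv (h : PartialInv g q) : Fin b ≃ {i : Fin n // (g i).isSome} where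
  toFun j := ⟨q j, by rw [h.1 j]; rfl⟩
  invFun i := (g i.1).get i.2
  left_inv j := by simp only [h.1 j, Option.get_some]
  right_inv i := Subtype.ext (h.2 i.1 _ (Option.some_get i.2).symm)

lemma rho_some (h : PartialInv g q) (τ : Equiv.Perm (Fin b)) {v : Fin n} {j : Fin b}
    (hv : g v = some j) : g (τ.extendDomain (domEquiv h) v) = some (τ j) := by
  have hqv : q j = v := h.2 v j hv
  have hv' : v = ((domEquiv h j : {i : Fin n // (g i).isSome}) : Fin n) := by
    simp [domEquiv, hqv]
  rw [hv', Equiv.Perm.extendDomain_apply_image]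
  show g ((domEquiv h) (τ j)).1 = some (τ j)
  simp [domEquiv, h.1 (τ j)]

lemma rho_isSome (h : PartialInv g q) (τ : Equiv.Perm (Fin b)) (v : Fin n) :
    (g (τ.extendDomain (domEquiv h) v)).isSome ↔ (g v).isSome := by
  by_cases hv : (g v).isSome
  · rcases Option.isSome_iff_exists.mp hv with ⟨j, hj⟩
    rw [rho_some h τ hj]
    simp [hv]
  · rw [Equiv.Perm.extendDomain_apply_not_subtype τ (domEquiv h) hv]

lemma posSet_rho (h : PartialInv g q) (τ : Equiv.Perm (Fin b)) (e : Equiv.Perm (Fin n)) :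
    posSet g (τ.extendDomain (domEquiv h) * e) = posSet g e := by
  ext i
  rw [mem_posSet, mem_posSet, Equiv.Perm.mul_apply, rho_isSome h τ]

lemma coe_orderIsoOfFin_congr {α : Type*} [LinearOrder α] {s t : Finset α} (hst : s = t)
    {k : ℕ} (hs : s.card = k) (ht : t.card = k) (i : Fin k) :
    ((s.orderIsoOfFin hs i : α)) = (t.orderIsoOfFin ht i : α) := by subst hst; rfl

lemma subPerm_rho (h : PartialInv g q) (τ : Equiv.Perm (Fin b)) (e : Equiv.Perm (Fin n)) :
    subPerm h (τ.extendDomain (domEquiv h) * e) = τ * subPerm h e := by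
  apply Equiv.ext
  intro k
  have hset := posSet_rho h τ e
  have h1 := subPerm_spec h (τ.extendDomain (domEquiv h) * e) k
  have h2 := subPerm_spec h e k
  rw [coe_orderIsoOfFin_congr hset (card_posSet h _) (card_posSet h e) k,
    Equiv.Perm.mul_apply] at h1
  have h3 := rho_some h τ h2
  rw [h1] at h3
  rw [Equiv.Perm.mul_apply]
  exact Option.some_inj.mp h3

lemma sum_subPerm (h : PartialInv g q) (F : Equiv.Perm (Fin b) → ℝ) :
    (Nat.factorial b : ℝ) * ∑ e : Equiv.Perm (Fin n), F (subPerm h e)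
      = (Nat.factorial n : ℝ) * ∑ σ : Equiv.Perm (Fin b), F σ := by
  classical
  have hfib : ∀ σ τ : Equiv.Perm (Fin b),
      (univ.filter fun e => subPerm h e = σ).card
        = (univ.filter fun e => subPerm h e = τ).card := by
    suffices hle : ∀ σ τ : Equiv.Perm (Fin b),
        (univ.filter fun e => subPerm h e = σ).card
          ≤ (univ.filter fun e => subPerm h e = τ).card by
      exact fun σ τ => le_antisymm (hle σ τ) (hle τ σ)
    intro σ τ
    apply Finset.card_le_card_of_injOn (fun e => (τ * σ⁻¹).extendDomain (domEquiv h) * e)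
    · intro e he
      simp only [Finset.mem_coe, mem_filter, mem_univ, true_and] at he ⊢
      rw [subPerm_rho h _ e, he, mul_assoc, inv_mul_cancel, mul_one]
    · intro e _ e' _ hee
      exact mul_left_cancel hee
  have hcount : Nat.factorial n
      = Nat.factorial b * (univ.filter fun e => subPerm h e = 1).card := by
    have h1 : (univ : Finset (Equiv.Perm (Fin n))).card
        = ∑ σ : Equiv.Perm (Fin b), (univ.filter fun e => subPerm h e = σ).card :=
      card_eq_sum_card_fiberwise (fun e _ => mem_univ (subPerm h e))
    rw [card_univ, Fintype.card_perm, Fintype.card_fin] at h1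
    rw [h1, Finset.sum_congr rfl (fun σ _ => hfib σ 1), sum_const, card_univ,
      Fintype.card_perm, Fintype.card_fin, smul_eq_mul]
  have hsum : ∑ e : Equiv.Perm (Fin n), F (subPerm h e)
      = ∑ σ : Equiv.Perm (Fin b),
          (((univ.filter fun e => subPerm h e = 1).card : ℕ) : ℝ) * F σ := by
    rw [← Finset.sum_fiberwise_of_maps_to (fun e _ => mem_univ (subPerm h e))
      (fun e => F (subPerm h e))]
    refine Finset.sum_congr rfl (fun σ _ => ?_)
    have : ∑ e ∈ univ.filter (fun e => subPerm h e = σ), F (subPerm h e)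
        = ∑ _e ∈ univ.filter (fun e => subPerm h e = σ), F σ :=
      Finset.sum_congr rfl (fun e he => by rw [(mem_filter.mp he).2])
    rw [this, sum_const, hfib σ 1, nsmul_eq_mul]
  rw [hsum, Finset.mul_sum, Finset.mul_sum]
  refine Finset.sum_congr rfl fun σ _ => ?_
  rw [← mul_assoc, ← Nat.cast_mul, ← hcount]

end Count

section StepLemmas
variable {m : ℕ}

lemma stepV_low0 (f : Fin m → ℝ) (sg : Fin m → Option ℝ) {y p : Fin m}
    (hpy : p < y) (hsy : sg y = some 0)
    (hlow : ∀ x, x ≤ y → sg x = none ∨ sg x = some 0)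
    (hfp : 0 ≤ f p) : stepV f sg p = 0 := by
  have hyA : y ∈ univ.filter (fun z => p < z ∧ (sg z).isSome) := by
    simp only [mem_filter, mem_univ, true_and]
    exact ⟨hpy, by rw [hsy]; rfl⟩
  have hne : (univ.filter (fun z => p < z ∧ (sg z).isSome)).Nonempty := ⟨y, hyA⟩
  have hHv : Hval sg p = some 0 := by
    rw [Hval, dif_pos hne]
    have hm := Finset.min'_mem _ hne
    rw [mem_filter] at hm
    have hle : (univ.filter (fun z => p < z ∧ (sg z).isSome)).min' hne ≤ y :=
      Finset.min'_le _ _ hyA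
    rcases hlow _ hle with h0 | h0
    · rw [h0] at hm; simp at hm
    · exact h0
  have hLv : Lval sg p = none ∨ Lval sg p = some 0 := by
    rw [Lval]
    split
    · rename_i hB
      right
      have hm := Finset.max'_mem _ hB
      rw [mem_filter] at hm
      have hle : (univ.filter (fun z => z < p ∧ (sg z).isSome)).max' hB ≤ y :=
        le_of_lt (lt_trans hm.2.1 hpy)
      rcases hlow _ hle with h0 | h0
      · rw [h0] at hm; simp at hm
      · exact h0
    · left; rfl
  rcases hLv with h | h <;> rw [stepV, hHv, h] <;>
    simp [oMin, oMax, min_eq_right hfp]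

lemma stepV_high1 (f : Fin m → ℝ) (sg : Fin m → Option ℝ) {y p : Fin m}
    (hpy : y < p) (hsy : sg y = some 1)
    (hhigh : ∀ x, y ≤ x → sg x = none ∨ sg x = some 1)
    (hfp : f p ≤ 1) : stepV f sg p = 1 := by
  have hyB : y ∈ univ.filter (fun z => z < p ∧ (sg z).isSome) := by
    simp only [mem_filter, mem_univ, true_and]
    exact ⟨hpy, by rw [hsy]; rfl⟩
  have hne : (univ.filter (fun z => z < p ∧ (sg z).isSome)).Nonempty := ⟨y, hyB⟩
  have hLv : Lval sg p = some 1 := by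
    rw [Lval, dif_pos hne]
    have hm := Finset.max'_mem _ hne
    rw [mem_filter] at hm
    have hle : y ≤ (univ.filter (fun z => z < p ∧ (sg z).isSome)).max' hne :=
      Finset.le_max' _ _ hyB
    rcases hhigh _ hle with h0 | h0
    · rw [h0] at hm; simp at hm
    · exact h0
  have hHv : Hval sg p = none ∨ Hval sg p = some 1 := by
    rw [Hval]
    split
    · rename_i hA
      right
      have hm := Finset.min'_mem _ hA
      rw [mem_filter] at hm
      have hle : y ≤ (univ.filter (fun z => p < z ∧ (sg z).isSome)).min' hA :=
        le_of_lt (lt_trans hpy hm.2.1)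
      rcases hhigh _ hle with h0 | h0
      · rw [h0] at hm; simp at hm
      · exact h0
    · left; rfl
  rcases hHv with h | h <;> rw [stepV, hLv, h] <;>
    simp [oMin, oMax, max_eq_right, min_eq_left hfp] <;> exact hfp

lemma min'_image_strictMono {α β : Type*} [LinearOrder α] [LinearOrder β] [DecidableEq β]
    {u : α → β} (hu : StrictMono u) (s : Finset α) (hs : s.Nonempty)
    (ht : (s.image u).Nonempty) : (s.image u).min' ht = u (s.min' hs) := by
  apply le_antisymm
  · exact Finset.min'_le _ _ (mem_image_of_mem u (Finset.min'_mem _ hs))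
  · apply Finset.le_min'
    intro z hz
    obtain ⟨a, ha, rfl⟩ := mem_image.mp hz
    exact hu.monotone (Finset.min'_le _ _ ha)

lemma stepV_case0 {b' : ℕ} (f : Fin m → ℝ) (f' : Fin b' → ℝ) (sg : Fin m → Option ℝ)
    (ss : Fin b' → Option ℝ) (y : Fin m) (u : Fin b' → Fin m)
    (hu : ∀ j, (u j : ℕ) = (y : ℕ) + 1 + (j : ℕ))
    (hcov : (y : ℕ) + 1 + b' = m)
    (hf' : ∀ j, f' j = f (u j))
    (hmatch : ∀ j, sg (u j) = ss j)
    (hsy : (sg y).isSome)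
    (hlow : ∀ x, x ≤ y → sg x = none ∨ sg x = some 0)
    (hssb : ∀ j v, ss j = some v → 0 ≤ v)
    (j' : Fin b') (hfp : 0 ≤ f' j') :
    stepV f sg (u j') = stepV f' ss j' := by
  have humono : StrictMono u := by
    intro a c hac
    have := hu a; have := hu c
    exact Fin.lt_def.mpr (by omega)
  have hyu : ∀ j : Fin b', y < u j := fun j => Fin.lt_def.mpr (by rw [hu]; omega)
  have hcover : ∀ z : Fin m, y < z → ∃ j : Fin b', u j = z := by
    intro z hz
    have hz' : (y : ℕ) < (z : ℕ) := hz
    have hzm : (z : ℕ) < m := z.isLt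
    refine ⟨⟨(z : ℕ) - (y : ℕ) - 1, by omega⟩, Fin.ext ?_⟩
    rw [hu]; simp; omega
  -- A (above) sets
  have hA : univ.filter (fun z => u j' < z ∧ (sg z).isSome)
      = (univ.filter (fun jj => j' < jj ∧ (ss jj).isSome)).image u := by
    ext z
    simp only [mem_filter, mem_univ, true_and, mem_image]
    constructor
    · rintro ⟨h1, h2⟩
      obtain ⟨jz, rfl⟩ := hcover z (lt_trans (hyu j') h1)
      exact ⟨jz, ⟨humono.lt_iff_lt.mp h1, by rw [← hmatch jz]; exact h2⟩, rfl⟩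
    · rintro ⟨jj, ⟨h1, h2⟩, rfl⟩
      exact ⟨humono h1, by rw [hmatch]; exact h2⟩
  have hH : Hval sg (u j') = Hval ss j' := by
    rw [Hval, Hval, hA]
    by_cases hne : (univ.filter (fun jj => j' < jj ∧ (ss jj).isSome)).Nonempty
    · rw [dif_pos (hne.image u), dif_pos hne]
      rw [min'_image_strictMono humono _ hne (hne.image u), hmatch]
    · rw [dif_neg (by rwa [Finset.image_nonempty]), dif_neg hne]
  -- B (below) sets
  have hB : ∀ z : Fin m, (z ∈ univ.filter (fun z => z < u j' ∧ (sg z).isSome) ∧ y < z)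
      ↔ z ∈ (univ.filter (fun jj => jj < j' ∧ (ss jj).isSome)).image u := by
    intro z
    simp only [mem_filter, mem_univ, true_and, mem_image]
    constructor
    · rintro ⟨⟨h1, h2⟩, h3⟩
      obtain ⟨jz, rfl⟩ := hcover z h3
      exact ⟨jz, ⟨humono.lt_iff_lt.mp h1, by rw [← hmatch jz]; exact h2⟩, rfl⟩
    · rintro ⟨jj, ⟨h1, h2⟩, rfl⟩
      exact ⟨⟨humono h1, by rw [hmatch]; exact h2⟩, hyu jj⟩
  have hyB : y ∈ univ.filter (fun z => z < u j' ∧ (sg z).isSome) := by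
    simp only [mem_filter, mem_univ, true_and]
    exact ⟨hyu j', hsy⟩
  have hgne : (univ.filter (fun z => z < u j' ∧ (sg z).isSome)).Nonempty := ⟨y, hyB⟩
  by_cases hne : (univ.filter (fun jj => jj < j' ∧ (ss jj).isSome)).Nonempty
  · -- L values match exactly
    have hmax : (univ.filter (fun z => z < u j' ∧ (sg z).isSome)).max' hgne
        = u ((univ.filter (fun jj => jj < j' ∧ (ss jj).isSome)).max' hne) := by
      apply le_antisymm
      · apply Finset.max'_le
        intro z hz
        by_cases hyz : y < z
        · obtain ⟨jj, hjj, rfl⟩ := mem_image.mp ((hB z).mp ⟨hz, hyz⟩)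
          exact humono.monotone (Finset.le_max' _ _ hjj)
        · exact le_trans (not_lt.mp hyz) (le_of_lt (hyu _))
      · apply Finset.le_max'
        exact ((hB _).mpr (mem_image_of_mem u (Finset.max'_mem _ hne))).1
    have hL : Lval sg (u j') = Lval ss j' := by
      rw [Lval, Lval, dif_pos hgne, dif_pos hne, hmax, hmatch]
    rw [stepV, stepV, hH, hL, hf' j']
  · -- sub L is none, glob L is some 0
    have hLs : Lval ss j' = none := by rw [Lval, dif_neg hne]
    have hmaxle : (univ.filter (fun z => z < u j' ∧ (sg z).isSome)).max' hgne ≤ y := by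
      by_contra hlt
      have := (hB _).mp ⟨Finset.max'_mem _ hgne, not_le.mp hlt⟩
      rw [← hB _] at this
      exact hne (by
        obtain ⟨jj, hjj, -⟩ := mem_image.mp ((hB _).mp ⟨Finset.max'_mem _ hgne, not_le.mp hlt⟩)
        exact ⟨jj, hjj⟩)
    have hLg : Lval sg (u j') = some 0 := by
      rw [Lval, dif_pos hgne]
      have hm := Finset.max'_mem _ hgne
      rw [mem_filter] at hm
      rcases hlow _ hmaxle with h0 | h0
      · rw [h0] at hm; simp at hm
      · exact h0
    have hv1 : 0 ≤ oMin (f' j') (Hval ss j') := by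
      rcases hov : Hval ss j' with _ | hv
      · exact hfp
      · have : 0 ≤ hv := by
          rw [Hval] at hov
          split at hov
          · exact hssb _ _ hov
          · cases hov
        simp only [oMin]
        exact le_min hfp this
    rw [stepV, stepV, hH, hLg, hLs, hf' j'] 
    rw [hf' j'] at hv1
    simp only [oMax]
    exact max_eq_left hv1

lemma max'_image_strictMono {α β : Type*} [LinearOrder α] [LinearOrder β] [DecidableEq β]
    {u : α → β} (hu : StrictMono u) (s : Finset α) (hs : s.Nonempty)
    (ht : (s.image u).Nonempty) : (s.image u).max' ht = u (s.max' hs) := by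
  apply le_antisymm
  · apply Finset.max'_le
    intro z hz
    obtain ⟨a, ha, rfl⟩ := mem_image.mp hz
    exact hu.monotone (Finset.le_max' _ _ ha)
  · exact Finset.le_max' _ _ (mem_image_of_mem u (Finset.max'_mem _ hs))

lemma stepV_case1 {b' : ℕ} (f : Fin m → ℝ) (f' : Fin b' → ℝ) (sg : Fin m → Option ℝ)
    (ss : Fin b' → Option ℝ) (y : Fin m) (u : Fin b' → Fin m)
    (hu : ∀ j, (u j : ℕ) = (j : ℕ))
    (hcov : b' = (y : ℕ))
    (hf' : ∀ j, f' j = f (u j))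
    (hmatch : ∀ j, sg (u j) = ss j)
    (hsy : (sg y).isSome)
    (hhigh : ∀ x, y ≤ x → sg x = none ∨ sg x = some 1)
    (hssb : ∀ j v, ss j = some v → v ≤ 1)
    (j' : Fin b') (hfp : f' j' ≤ 1) :
    stepV f sg (u j') = stepV f' ss j' := by
  have humono : StrictMono u := by
    intro a c hac
    have := hu a; have := hu c
    exact Fin.lt_def.mpr (by have := Fin.lt_def.mp hac; omega)
  have hyu : ∀ j : Fin b', u j < y := fun j =>
    Fin.lt_def.mpr (by rw [hu]; have := j.isLt; omega)
  have hcover : ∀ z : Fin m, z < y → ∃ j : Fin b', u j = z := by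
    intro z hz
    have hz' : (z : ℕ) < (y : ℕ) := hz
    refine ⟨⟨(z : ℕ), by omega⟩, Fin.ext ?_⟩
    rw [hu]
  -- B (below) sets match exactly
  have hB : univ.filter (fun z => z < u j' ∧ (sg z).isSome)
      = (univ.filter (fun jj => jj < j' ∧ (ss jj).isSome)).image u := by
    ext z
    simp only [mem_filter, mem_univ, true_and, mem_image]
    constructor
    · rintro ⟨h1, h2⟩
      obtain ⟨jz, rfl⟩ := hcover z (lt_trans h1 (hyu j'))
      exact ⟨jz, ⟨humono.lt_iff_lt.mp h1, by rw [← hmatch jz]; exact h2⟩, rfl⟩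
    · rintro ⟨jj, ⟨h1, h2⟩, rfl⟩
      exact ⟨humono h1, by rw [hmatch]; exact h2⟩
  have hL : Lval sg (u j') = Lval ss j' := by
    rw [Lval, Lval, hB]
    by_cases hne : (univ.filter (fun jj => jj < j' ∧ (ss jj).isSome)).Nonempty
    · rw [dif_pos (hne.image u), dif_pos hne]
      rw [max'_image_strictMono humono _ hne (hne.image u), hmatch]
    · rw [dif_neg (by rwa [Finset.image_nonempty]), dif_neg hne]
  -- A (above) sets: mixed
  have hA : ∀ z : Fin m, (z ∈ univ.filter (fun z => u j' < z ∧ (sg z).isSome) ∧ z < y)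
      ↔ z ∈ (univ.filter (fun jj => j' < jj ∧ (ss jj).isSome)).image u := by
    intro z
    simp only [mem_filter, mem_univ, true_and, mem_image]
    constructor
    · rintro ⟨⟨h1, h2⟩, h3⟩
      obtain ⟨jz, rfl⟩ := hcover z h3
      exact ⟨jz, ⟨humono.lt_iff_lt.mp h1, by rw [← hmatch jz]; exact h2⟩, rfl⟩
    · rintro ⟨jj, ⟨h1, h2⟩, rfl⟩
      exact ⟨⟨humono h1, by rw [hmatch]; exact h2⟩, hyu jj⟩
  have hyA : y ∈ univ.filter (fun z => u j' < z ∧ (sg z).isSome) := by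
    simp only [mem_filter, mem_univ, true_and]
    exact ⟨hyu j', hsy⟩
  have hgne : (univ.filter (fun z => u j' < z ∧ (sg z).isSome)).Nonempty := ⟨y, hyA⟩
  by_cases hne : (univ.filter (fun jj => j' < jj ∧ (ss jj).isSome)).Nonempty
  · have hmin : (univ.filter (fun z => u j' < z ∧ (sg z).isSome)).min' hgne
        = u ((univ.filter (fun jj => j' < jj ∧ (ss jj).isSome)).min' hne) := by
      apply le_antisymm
      · apply Finset.min'_le
        exact ((hA _).mpr (mem_image_of_mem u (Finset.min'_mem _ hne))).1
      · apply Finset.le_min'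
        intro z hz
        by_cases hzy : z < y
        · obtain ⟨jj, hjj, rfl⟩ := mem_image.mp ((hA z).mp ⟨hz, hzy⟩)
          exact humono.monotone (Finset.min'_le _ _ hjj)
        · exact le_trans (le_of_lt (hyu _)) (not_lt.mp hzy)
    have hH : Hval sg (u j') = Hval ss j' := by
      rw [Hval, Hval, dif_pos hgne, dif_pos hne, hmin, hmatch]
    rw [stepV, stepV, hH, hL, hf' j']
  · have hHs : Hval ss j' = none := by rw [Hval, dif_neg hne]
    have hminge : y ≤ (univ.filter (fun z => u j' < z ∧ (sg z).isSome)).min' hgne := by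
      by_contra hlt
      obtain ⟨jj, hjj, -⟩ := mem_image.mp ((hA _).mp ⟨Finset.min'_mem _ hgne, not_le.mp hlt⟩)
      exact hne ⟨jj, hjj⟩
    have hHg : Hval sg (u j') = some 1 := by
      rw [Hval, dif_pos hgne]
      have hm := Finset.min'_mem _ hgne
      rw [mem_filter] at hm
      rcases hhigh _ hminge with h0 | h0
      · rw [h0] at hm; simp at hm
      · exact h0
    rw [stepV, stepV, hHg, hHs, hf' j']
    rw [hf' j'] at hfp
    simp only [oMin]
    rw [min_eq_left hfp, hL]

end StepLemmas

section Interval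
variable {n : ℕ}

def u0 (y : Fin (n+1)) : Fin (n - (y:ℕ)) → Fin (n+1) :=
  fun j => ⟨(y:ℕ) + 1 + (j:ℕ), by have := j.isLt; omega⟩

def g0 (y : Fin (n+1)) : Fin n → Option (Fin (n - (y:ℕ))) :=
  fun i => if h : (y:ℕ) ≤ (i:ℕ) then some ⟨(i:ℕ) - (y:ℕ), by have := i.isLt; omega⟩ else none

def q0 (y : Fin (n+1)) : Fin (n - (y:ℕ)) → Fin n :=
  fun j => ⟨(y:ℕ) + (j:ℕ), by have := j.isLt; omega⟩

lemma pinv0 (y : Fin (n+1)) : PartialInv (g0 y) (q0 y) := by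
  constructor
  · intro j
    rw [g0, dif_pos (by simp [q0] : (y:ℕ) ≤ ((q0 y j : Fin n):ℕ))]
    congr 1
    apply Fin.ext
    simp [q0]
  · intro i j hij
    rw [g0] at hij
    split at hij
    · rename_i h
      apply Fin.ext
      have hj := (Option.some_inj.mp hij).symm
      have hjv : (j:ℕ) = (i:ℕ) - (y:ℕ) := by rw [hj]
      simp only [q0]
      omega
    · cases hij

lemma u0_val (y : Fin (n+1)) (j : Fin (n - (y:ℕ))) : ((u0 y j) : ℕ) = (y:ℕ)+1+(j:ℕ) := rfl

lemma u0_inj (y : Fin (n+1)) : Function.Injective (u0 y) := by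
  intro a c h
  have := congrArg Fin.val h
  simp only [u0_val] at this
  exact Fin.ext (by omega)

lemma lt_u0 (y : Fin (n+1)) (j : Fin (n - (y:ℕ))) : y < u0 y j :=
  Fin.lt_def.mpr (by rw [u0_val]; omega)

def u1 (y : Fin (n+1)) : Fin (y:ℕ) → Fin (n+1) :=
  fun j => ⟨(j:ℕ), by have := j.isLt; have := y.isLt; omega⟩

def g1 (y : Fin (n+1)) : Fin n → Option (Fin (y:ℕ)) :=
  fun i => if h : (i:ℕ)+1 < (y:ℕ) then some ⟨(i:ℕ)+1, h⟩
    else if h' : (i:ℕ)+1 = (y:ℕ) then some ⟨0, by omega⟩ else none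

def q1 (y : Fin (n+1)) : Fin (y:ℕ) → Fin n :=
  fun j => if (j:ℕ) = 0 then ⟨(y:ℕ)-1, by have := j.isLt; have := y.isLt; omega⟩
    else ⟨(j:ℕ)-1, by have := j.isLt; have := y.isLt; omega⟩

lemma pinv1 (y : Fin (n+1)) : PartialInv (g1 y) (q1 y) := by
  constructor
  · intro j
    rw [q1]
    by_cases hj : (j:ℕ) = 0
    · rw [if_pos hj, g1]
      have hy1 : 1 ≤ (y:ℕ) := by have := j.isLt; omega
      rw [dif_neg (by simp; omega), dif_pos (by simp; omega)]
      congr 1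
      exact Fin.ext (by simp [hj])
    · rw [if_neg hj, g1]
      have hjy := j.isLt
      rw [dif_pos (by simp; omega)]
      congr 1
      exact Fin.ext (by simp; omega)
  · intro i j hij
    rw [g1] at hij
    split at hij
    · rename_i h
      have hj := (Option.some_inj.mp hij).symm
      have hjv : (j:ℕ) = (i:ℕ)+1 := by rw [hj]
      rw [q1, if_neg (by omega)]
      exact Fin.ext (by simp; omega)
    · split at hij
      · rename_i h h'
        have hj := (Option.some_inj.mp hij).symm
        have hjv : (j:ℕ) = 0 := by rw [hj]
        rw [q1, if_pos hjv]
        exact Fin.ext (by simp; omega)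
      · cases hij

lemma u1_val (y : Fin (n+1)) (j : Fin (y:ℕ)) : ((u1 y j) : ℕ) = (j:ℕ) := rfl

lemma u1_inj (y : Fin (n+1)) : Function.Injective (u1 y) := by
  intro a c h
  have := congrArg Fin.val h
  simp only [u1_val] at this
  exact Fin.ext this

lemma u1_lt (y : Fin (n+1)) (j : Fin (y:ℕ)) : u1 y j < y :=
  Fin.lt_def.mpr (by rw [u1_val]; exact j.isLt)

lemma swap_succ_val (y : Fin (n+1)) (i : Fin n) :
    ((Equiv.swap (0 : Fin (n+1)) y i.succ : Fin (n+1)) : ℕ)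
      = if (i:ℕ) + 1 = (y:ℕ) then 0 else (i:ℕ) + 1 := by
  rcases eq_or_ne ((i:ℕ)+1) ((y:ℕ)) with h | h
  · rw [if_pos h, Equiv.swap_apply_def, if_neg (Fin.succ_ne_zero i),
      if_pos (Fin.ext (by rw [Fin.val_succ]; exact h))]
    simp
  · rw [if_neg h, Equiv.swap_apply_def, if_neg (Fin.succ_ne_zero i),
      if_neg (fun hc => h (by rw [← Fin.val_succ i, hc]))]
    exact Fin.val_succ i

end Interval

section CaseLemmas
variable {n : ℕ}

lemma caseR0 (f : Fin (n+1) → ℝ) (hf : ∀ x, f x = 0 ∨ f x = 1)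
    (y : Fin (n+1)) (hy : f y = 0) (e : Equiv.Perm (Fin n)) :
    (∀ x : Fin (n+1), x ≤ y →
        greedyMono f (Equiv.Perm.decomposeFin.symm (y, e)) x = 0)
    ∧ (∀ j : Fin (n - (y:ℕ)),
        greedyMono f (Equiv.Perm.decomposeFin.symm (y, e)) (u0 y j)
          = greedyMono (fun j => f (u0 y j)) (subPerm (pinv0 y) e) j) := by
  set π := Equiv.Perm.decomposeFin.symm (y, e) with hπdef
  set f' : Fin (n - (y:ℕ)) → ℝ := fun j => f (u0 y j) with hf'def
  set π' := subPerm (pinv0 y) e with hπ'def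
  set K : ℕ → ℕ := fun t => ((posSet (g0 y) e).filter (fun i : Fin n => (i:ℕ)+1 < t)).card with hK
  have hf'bool : ∀ j, f' j = 0 ∨ f' j = 1 := fun j => hf (u0 y j)
  have hπ0 : π ⟨0, Nat.succ_pos n⟩ = y := by
    rw [hπdef, show (⟨0, Nat.succ_pos n⟩ : Fin (n+1)) = 0 from rfl,
      Equiv.Perm.decomposeFin_symm_apply_zero]
  have hπt : ∀ (t : ℕ) (ht : t < n+1) (ht1 : 1 ≤ t),
      π ⟨t, ht⟩ = Equiv.swap 0 y (e ⟨t-1, by omega⟩).succ := by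
    intro t ht ht1
    have hmk : (⟨t, ht⟩ : Fin (n+1)) = (⟨t-1, by omega⟩ : Fin n).succ :=
      Fin.ext (by simp [Fin.val_succ]; omega)
    rw [hπdef, hmk, Equiv.Perm.decomposeFin_symm_apply_succ]
  have INV : ∀ t, 1 ≤ t → t ≤ n + 1 →
      (∀ x : Fin (n+1), x ≤ y →
          (greedyState f π t x = none ∨ greedyState f π t x = some 0))
      ∧ greedyState f π t y = some 0
      ∧ ∀ j, greedyState f π t (u0 y j) = greedyState f' π' (K t) j := by
    intro t ht1
    induction t, ht1 using Nat.le_induction with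
    | base =>
      intro _
      have hs1 : greedyState f π 1 = greedyStep f (greedyState f π 0) y := by
        rw [greedyState_succ f π (Nat.succ_pos n), hπ0]
      have hsV : stepV f (greedyState f π 0) y = f y := by
        have hH : Hval (greedyState f π 0) y = none := by
          rw [Hval, dif_neg]
          simp [greedyState]
        have hL : Lval (greedyState f π 0) y = none := by
          rw [Lval, dif_neg]
          simp [greedyState]
        rw [stepV, hH, hL]
        rfl
      have hyval : greedyState f π 1 y = some 0 := by
        rw [hs1, greedyStep_apply_self, hsV, hy]
      refine ⟨?_, hyval, ?_⟩
      · intro x hx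
        by_cases hxy : x = y
        · right; rw [hxy]; exact hyval
        · left
          rw [hs1, greedyStep_apply_ne _ _ _ _ hxy]
          rfl
      · intro j
        have hne : u0 y j ≠ y := ne_of_gt (lt_u0 y j)
        have hK1 : K 1 = 0 := by
          simp only [hK]
          rw [Finset.card_eq_zero, Finset.filter_eq_empty_iff]
          intro i _
          omega
        rw [hs1, greedyStep_apply_ne _ _ _ _ hne, hK1]
        rfl
    | succ t ht1 ih =>
      intro ht2
      obtain ⟨ihA, ihY, ihB⟩ := ih (by omega)
      have htn : t < n + 1 := by omega
      set i₀ : Fin n := ⟨t-1, by omega⟩ with hi₀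
      have hsucc : greedyState f π (t+1)
          = greedyStep f (greedyState f π t) (Equiv.swap 0 y (e i₀).succ) := by
        rw [greedyState_succ f π htn, hπt t htn ht1]
      have hpval : ((Equiv.swap (0 : Fin (n+1)) y (e i₀).succ : Fin (n+1)) : ℕ)
          = if ((e i₀):ℕ)+1 = (y:ℕ) then 0 else ((e i₀):ℕ)+1 := swap_succ_val y (e i₀)
      by_cases hcase : (y:ℕ) ≤ ((e i₀):ℕ)
      · -- step inside the subinterval
        have hylt : (y:ℕ) ≤ n := by have := y.isLt; omega
        have hei := (e i₀).isLt
        have hpv : ((Equiv.swap (0 : Fin (n+1)) y (e i₀).succ : Fin (n+1)) : ℕ)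
            = ((e i₀):ℕ)+1 := by rw [hpval, if_neg (by omega)]
        set j' : Fin (n - (y:ℕ)) := ⟨((e i₀):ℕ) - (y:ℕ), by omega⟩ with hj'
        have hpu : Equiv.swap (0 : Fin (n+1)) y (e i₀).succ = u0 y j' :=
          Fin.ext (by rw [hpv, u0_val]; simp only [hj']; omega)
        have hg : g0 y (e i₀) = some j' := by rw [g0, dif_pos hcase]
        have hpos : i₀ ∈ posSet (g0 y) e := mem_posSet.mpr (by rw [hg]; rfl)
        have hkkt : K t = ((posSet (g0 y) e).filter (· < i₀)).card := by
          simp only [hK]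
          congr 1
          apply Finset.filter_congr
          intro i _
          have : (i < i₀) = ((i:ℕ) < t - 1) := by rw [Fin.lt_def]
          simp only [this, eq_iff_iff]
          constructor <;> (intro; omega)
        obtain ⟨hrlt, hweq⟩ :=
          orderIsoOfFin_rank (posSet (g0 y) e) (card_posSet (pinv0 y) e) hpos
        have hKlt : K t < n - (y:ℕ) := by rw [hkkt]; exact hrlt
        have hπ'K : π' ⟨K t, hKlt⟩ = j' := by
          rw [show (⟨K t, hKlt⟩ : Fin (n - (y:ℕ)))
              = ⟨((posSet (g0 y) e).filter (· < i₀)).card, hrlt⟩ from Fin.ext hkkt]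
          have hspec := subPerm_spec (pinv0 y) e
            ⟨((posSet (g0 y) e).filter (· < i₀)).card, hrlt⟩
          rw [hweq, hg] at hspec
          exact (Option.some_inj.mp hspec).symm
        have hK1 : K (t+1) = K t + 1 := by
          simp only [hK]
          have hins : (posSet (g0 y) e).filter (fun i : Fin n => (i:ℕ)+1 < t+1)
              = insert i₀ ((posSet (g0 y) e).filter (fun i : Fin n => (i:ℕ)+1 < t)) := by
            ext i
            simp only [mem_filter, mem_insert]
            constructor
            · rintro ⟨hip, hilt⟩
              by_cases hit : (i:ℕ) = t - 1
              · exact Or.inl (Fin.ext hit)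
              · exact Or.inr ⟨hip, by omega⟩
            · rintro (rfl | ⟨hip, hilt⟩)
              · exact ⟨hpos, by simp only [hi₀]; omega⟩
              · exact ⟨hip, by omega⟩
          rw [hins, Finset.card_insert_of_notMem (by simp only [mem_filter, hi₀]; omega)]
        have hsub : greedyState f' π' (K t + 1)
            = greedyStep f' (greedyState f' π' (K t)) j' := by
          rw [greedyState_succ f' π' hKlt, hπ'K]
        refine ⟨?_, ?_, ?_⟩
        · intro x hx
          have hxp : x ≠ Equiv.swap 0 y (e i₀).succ := by
            rw [hpu]
            exact fun hc => absurd (hc ▸ hx) (not_le.mpr (lt_u0 y j'))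
          rw [hsucc, greedyStep_apply_ne _ _ _ _ hxp]
          exact ihA x hx
        · have hyp : y ≠ Equiv.swap 0 y (e i₀).succ := by
            rw [hpu]; exact ne_of_lt (lt_u0 y j')
          rw [hsucc, greedyStep_apply_ne _ _ _ _ hyp]
          exact ihY
        · intro j
          rw [hsucc, hK1, hsub, hpu]
          by_cases hj : j = j'
          · subst hj
            rw [greedyStep_apply_self, greedyStep_apply_self]
            congr 1
            refine stepV_case0 f f' (greedyState f π t) (greedyState f' π' (K t)) y (u0 y)
              (fun j => u0_val y j) (by omega) (fun j => rfl) ihB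
              (by rw [ihY]; rfl) ihA ?_ j' ?_
            · intro j v hv
              rcases greedyState_boolean π' hf'bool (K t) j v hv with h | h <;> rw [h] <;> norm_num
            · rcases hf'bool j' with h | h <;> rw [h] <;> norm_num
          · have hne1 : u0 y j ≠ u0 y j' := fun hc => hj (u0_inj y hc)
            rw [greedyStep_apply_ne _ _ _ _ hne1, greedyStep_apply_ne _ _ _ _ hj]
            exact ihB j
      · -- step below y
        have hylt : 0 < (y:ℕ) := by omega
        have hplty : ((Equiv.swap (0 : Fin (n+1)) y (e i₀).succ : Fin (n+1)) : ℕ) < (y:ℕ) := by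
          rw [hpval]
          split <;> omega
        have hplty' : Equiv.swap (0 : Fin (n+1)) y (e i₀).succ < y := Fin.lt_def.mpr hplty
        have hgnone : g0 y (e i₀) = none := by rw [g0, dif_neg (by omega)]
        have hK1 : K (t+1) = K t := by
          simp only [hK]
          congr 1
          ext i
          simp only [mem_filter]
          constructor
          · rintro ⟨hip, hilt⟩
            refine ⟨hip, ?_⟩
            by_cases hit : (i:ℕ) = t - 1
            · exfalso
              have : i = i₀ := Fin.ext hit
              rw [this] at hip
              rw [mem_posSet, hgnone] at hip
              simp at hip
            · omega
          · rintro ⟨hip, hilt⟩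
            exact ⟨hip, by omega⟩
        refine ⟨?_, ?_, ?_⟩
        · intro x hx
          by_cases hxp : x = Equiv.swap 0 y (e i₀).succ
          · right
            rw [hsucc, hxp, greedyStep_apply_self]
            congr 1
            refine stepV_low0 f (greedyState f π t) hplty' ihY ihA ?_
            rcases hf (Equiv.swap (0 : Fin (n+1)) y (e i₀).succ) with h | h <;> rw [h] <;> norm_num
          · rw [hsucc, greedyStep_apply_ne _ _ _ _ hxp]
            exact ihA x hx
        · have hyp : y ≠ Equiv.swap 0 y (e i₀).succ := ne_of_gt hplty'
          rw [hsucc, greedyStep_apply_ne _ _ _ _ hyp]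
          exact ihY
        · intro j
          have hne1 : u0 y j ≠ Equiv.swap 0 y (e i₀).succ :=
            ne_of_gt (lt_trans hplty' (lt_u0 y j))
          rw [hsucc, greedyStep_apply_ne _ _ _ _ hne1, hK1]
          exact ihB j
  obtain ⟨hA, -, hB⟩ := INV (n+1) (by omega) le_rfl
  have hKfull : K (n+1) = n - (y:ℕ) := by
    simp only [hK]
    rw [Finset.filter_true_of_mem (fun i _ => by have := i.isLt; omega)]
    exact card_posSet (pinv0 y) e
  constructor
  · intro x hx
    rcases hA x hx with h | h
    · exfalso
      have hs : (greedyState f π (n+1) x).isSome := by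
        rw [isSome_greedyState_iff f π le_rfl x]
        exact (π.symm x).isLt
      rw [h] at hs
      simp at hs
    · exact greedyMono_eq f π le_rfl h
  · intro j
    have hj := hB j
    rw [hKfull] at hj
    rw [greedyMono, greedyMono, hj]

end CaseLemmas

lemma caseR1 {n : ℕ} (f : Fin (n+1) → ℝ) (hf : ∀ x, f x = 0 ∨ f x = 1)
    (y : Fin (n+1)) (hy : f y = 1) (e : Equiv.Perm (Fin n)) :
    (∀ x : Fin (n+1), y ≤ x →
        greedyMono f (Equiv.Perm.decomposeFin.symm (y, e)) x = 1)
    ∧ (∀ j : Fin (y:ℕ),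
        greedyMono f (Equiv.Perm.decomposeFin.symm (y, e)) (u1 y j)
          = greedyMono (fun j => f (u1 y j)) (subPerm (pinv1 y) e) j) := by
  set π := Equiv.Perm.decomposeFin.symm (y, e) with hπdef
  set f' : Fin (y:ℕ) → ℝ := fun j => f (u1 y j) with hf'def
  set π' := subPerm (pinv1 y) e with hπ'def
  set K : ℕ → ℕ := fun t => ((posSet (g1 y) e).filter (fun i : Fin n => (i:ℕ)+1 < t)).card with hK
  have hf'bool : ∀ j, f' j = 0 ∨ f' j = 1 := fun j => hf (u1 y j)
  have hπ0 : π ⟨0, Nat.succ_pos n⟩ = y := by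
    rw [hπdef, show (⟨0, Nat.succ_pos n⟩ : Fin (n+1)) = 0 from rfl,
      Equiv.Perm.decomposeFin_symm_apply_zero]
  have hπt : ∀ (t : ℕ) (ht : t < n+1) (ht1 : 1 ≤ t),
      π ⟨t, ht⟩ = Equiv.swap 0 y (e ⟨t-1, by omega⟩).succ := by
    intro t ht ht1
    have hmk : (⟨t, ht⟩ : Fin (n+1)) = (⟨t-1, by omega⟩ : Fin n).succ :=
      Fin.ext (by simp [Fin.val_succ]; omega)
    rw [hπdef, hmk, Equiv.Perm.decomposeFin_symm_apply_succ]
  have INV : ∀ t, 1 ≤ t → t ≤ n + 1 →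
      (∀ x : Fin (n+1), y ≤ x →
          (greedyState f π t x = none ∨ greedyState f π t x = some 1))
      ∧ greedyState f π t y = some 1
      ∧ ∀ j, greedyState f π t (u1 y j) = greedyState f' π' (K t) j := by
    intro t ht1
    induction t, ht1 using Nat.le_induction with
    | base =>
      intro _
      have hs1 : greedyState f π 1 = greedyStep f (greedyState f π 0) y := by
        rw [greedyState_succ f π (Nat.succ_pos n), hπ0]
      have hsV : stepV f (greedyState f π 0) y = f y := by
        have hH : Hval (greedyState f π 0) y = none := by
          rw [Hval, dif_neg]
          simp [greedyState]
        have hL : Lval (greedyState f π 0) y = none := by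
          rw [Lval, dif_neg]
          simp [greedyState]
        rw [stepV, hH, hL]
        rfl
      have hyval : greedyState f π 1 y = some 1 := by
        rw [hs1, greedyStep_apply_self, hsV, hy]
      refine ⟨?_, hyval, ?_⟩
      · intro x hx
        by_cases hxy : x = y
        · right; rw [hxy]; exact hyval
        · left
          rw [hs1, greedyStep_apply_ne _ _ _ _ hxy]
          rfl
      · intro j
        have hne : u1 y j ≠ y := ne_of_lt (u1_lt y j)
        have hK1 : K 1 = 0 := by
          simp only [hK]
          rw [Finset.card_eq_zero, Finset.filter_eq_empty_iff]
          intro i _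
          omega
        rw [hs1, greedyStep_apply_ne _ _ _ _ hne, hK1]
        rfl
    | succ t ht1 ih =>
      intro ht2
      obtain ⟨ihA, ihY, ihB⟩ := ih (by omega)
      have htn : t < n + 1 := by omega
      set i₀ : Fin n := ⟨t-1, by omega⟩ with hi₀
      have hsucc : greedyState f π (t+1)
          = greedyStep f (greedyState f π t) (Equiv.swap 0 y (e i₀).succ) := by
        rw [greedyState_succ f π htn, hπt t htn ht1]
      have hpval : ((Equiv.swap (0 : Fin (n+1)) y (e i₀).succ : Fin (n+1)) : ℕ)
          = if ((e i₀):ℕ)+1 = (y:ℕ) then 0 else ((e i₀):ℕ)+1 := swap_succ_val y (e i₀)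
      by_cases hcase : ((e i₀):ℕ)+1 ≤ (y:ℕ)
      · -- step inside the subinterval (below y)
        set j' : Fin (y:ℕ) :=
          ⟨if ((e i₀):ℕ)+1 = (y:ℕ) then 0 else ((e i₀):ℕ)+1, by split <;> omega⟩ with hj'
        have hpu : Equiv.swap (0 : Fin (n+1)) y (e i₀).succ = u1 y j' :=
          Fin.ext (by rw [hpval]; rfl)
        have hg : g1 y (e i₀) = some j' := by
          by_cases h1 : ((e i₀):ℕ)+1 < (y:ℕ)
          · rw [g1, dif_pos h1]
            congr 1
            exact Fin.ext (by simp only [hj']; rw [if_neg (by omega)])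
          · have h2 : ((e i₀):ℕ)+1 = (y:ℕ) := by omega
            rw [g1, dif_neg (by omega), dif_pos h2]
            congr 1
            exact Fin.ext (by simp only [hj']; rw [if_pos h2])
        have hpos : i₀ ∈ posSet (g1 y) e := mem_posSet.mpr (by rw [hg]; rfl)
        have hkkt : K t = ((posSet (g1 y) e).filter (· < i₀)).card := by
          simp only [hK]
          congr 1
          apply Finset.filter_congr
          intro i _
          have : (i < i₀) = ((i:ℕ) < t - 1) := by rw [Fin.lt_def]
          simp only [this, eq_iff_iff]
          constructor <;> (intro; omega)
        obtain ⟨hrlt, hweq⟩ :=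
          orderIsoOfFin_rank (posSet (g1 y) e) (card_posSet (pinv1 y) e) hpos
        have hKlt : K t < (y:ℕ) := by rw [hkkt]; exact hrlt
        have hπ'K : π' ⟨K t, hKlt⟩ = j' := by
          rw [show (⟨K t, hKlt⟩ : Fin (y:ℕ))
              = ⟨((posSet (g1 y) e).filter (· < i₀)).card, hrlt⟩ from Fin.ext hkkt]
          have hspec := subPerm_spec (pinv1 y) e
            ⟨((posSet (g1 y) e).filter (· < i₀)).card, hrlt⟩
          rw [hweq, hg] at hspec
          exact (Option.some_inj.mp hspec).symm
        have hK1 : K (t+1) = K t + 1 := by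
          simp only [hK]
          have hins : (posSet (g1 y) e).filter (fun i : Fin n => (i:ℕ)+1 < t+1)
              = insert i₀ ((posSet (g1 y) e).filter (fun i : Fin n => (i:ℕ)+1 < t)) := by
            ext i
            simp only [mem_filter, mem_insert]
            constructor
            · rintro ⟨hip, hilt⟩
              by_cases hit : (i:ℕ) = t - 1
              · exact Or.inl (Fin.ext hit)
              · exact Or.inr ⟨hip, by omega⟩
            · rintro (rfl | ⟨hip, hilt⟩)
              · exact ⟨hpos, by simp only [hi₀]; omega⟩
              · exact ⟨hip, by omega⟩
          rw [hins, Finset.card_insert_of_notMem (by simp only [mem_filter, hi₀]; omega)]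
        have hsub : greedyState f' π' (K t + 1)
            = greedyStep f' (greedyState f' π' (K t)) j' := by
          rw [greedyState_succ f' π' hKlt, hπ'K]
        refine ⟨?_, ?_, ?_⟩
        · intro x hx
          have hxp : x ≠ Equiv.swap 0 y (e i₀).succ := by
            rw [hpu]
            exact fun hc => absurd (hc ▸ hx) (not_le.mpr (u1_lt y j'))
          rw [hsucc, greedyStep_apply_ne _ _ _ _ hxp]
          exact ihA x hx
        · have hyp : y ≠ Equiv.swap 0 y (e i₀).succ := by
            rw [hpu]; exact ne_of_gt (u1_lt y j')
          rw [hsucc, greedyStep_apply_ne _ _ _ _ hyp]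
          exact ihY
        · intro j
          rw [hsucc, hK1, hsub, hpu]
          by_cases hj : j = j'
          · subst hj
            rw [greedyStep_apply_self, greedyStep_apply_self]
            congr 1
            refine stepV_case1 f f' (greedyState f π t) (greedyState f' π' (K t)) y (u1 y)
              (fun j => u1_val y j) rfl (fun j => rfl) ihB
              (by rw [ihY]; rfl) ihA ?_ j' ?_
            · intro j v hv
              rcases greedyState_boolean π' hf'bool (K t) j v hv with h | h <;> rw [h] <;> norm_num
            · rcases hf'bool j' with h | h <;> rw [h] <;> norm_num
          · have hne1 : u1 y j ≠ u1 y j' := fun hc => hj (u1_inj y hc)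
            rw [greedyStep_apply_ne _ _ _ _ hne1, greedyStep_apply_ne _ _ _ _ hj]
            exact ihB j
      · -- step above y
        have hpgty : (y:ℕ) < ((Equiv.swap (0 : Fin (n+1)) y (e i₀).succ : Fin (n+1)) : ℕ) := by
          rw [hpval]
          split <;> omega
        have hpgty' : y < Equiv.swap (0 : Fin (n+1)) y (e i₀).succ := Fin.lt_def.mpr hpgty
        have hgnone : g1 y (e i₀) = none := by
          rw [g1, dif_neg (by omega), dif_neg (by omega)]
        have hK1 : K (t+1) = K t := by
          simp only [hK]
          congr 1
          ext i
          simp only [mem_filter]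
          constructor
          · rintro ⟨hip, hilt⟩
            refine ⟨hip, ?_⟩
            by_cases hit : (i:ℕ) = t - 1
            · exfalso
              have hii : i = i₀ := Fin.ext hit
              rw [hii] at hip
              rw [mem_posSet, hgnone] at hip
              simp at hip
            · omega
          · rintro ⟨hip, hilt⟩
            exact ⟨hip, by omega⟩
        refine ⟨?_, ?_, ?_⟩
        · intro x hx
          by_cases hxp : x = Equiv.swap 0 y (e i₀).succ
          · right
            rw [hsucc, hxp, greedyStep_apply_self]
            congr 1
            refine stepV_high1 f (greedyState f π t) hpgty' ihY ihA ?_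
            rcases hf (Equiv.swap (0 : Fin (n+1)) y (e i₀).succ) with h | h <;> rw [h] <;> norm_num
          · rw [hsucc, greedyStep_apply_ne _ _ _ _ hxp]
            exact ihA x hx
        · have hyp : y ≠ Equiv.swap 0 y (e i₀).succ := ne_of_lt hpgty'
          rw [hsucc, greedyStep_apply_ne _ _ _ _ hyp]
          exact ihY
        · intro j
          have hne1 : u1 y j ≠ Equiv.swap 0 y (e i₀).succ :=
            ne_of_lt (lt_trans (u1_lt y j) hpgty')
          rw [hsucc, greedyStep_apply_ne _ _ _ _ hne1, hK1]
          exact ihB j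
  obtain ⟨hA, -, hB⟩ := INV (n+1) (by omega) le_rfl
  have hKfull : K (n+1) = (y:ℕ) := by
    simp only [hK]
    rw [Finset.filter_true_of_mem (fun i _ => by have := i.isLt; omega)]
    exact card_posSet (pinv1 y) e
  constructor
  · intro x hx
    rcases hA x hx with h | h
    · exfalso
      have hs : (greedyState f π (n+1) x).isSome := by
        rw [isSome_greedyState_iff f π le_rfl x]
        exact (π.symm x).isLt
      rw [h] at hs
      simp at hs
    · exact greedyMono_eq f π le_rfl h
  · intro j
    have hj := hB j
    rw [hKfull] at hj
    rw [greedyMono, greedyMono, hj]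

section Assembly

lemma card_ge {m : ℕ} (y : Fin m) :
    (univ.filter (fun x : Fin m => y ≤ x)).card = m - (y:ℕ) := by
  have h : univ.filter (fun x : Fin m => y ≤ x) = Finset.Ici y := by
    ext z
    simp [Finset.mem_Ici]
  rw [h, Fin.card_Ici]

lemma filter_gt_eq_image0 {n : ℕ} (y : Fin (n+1)) :
    univ.filter (fun x : Fin (n+1) => y < x) = univ.image (u0 y) := by
  ext z
  simp only [mem_filter, mem_univ, true_and, mem_image]
  constructor
  · intro hz
    have hz' : (y:ℕ) < (z:ℕ) := hz
    exact ⟨⟨(z:ℕ) - (y:ℕ) - 1, by have := z.isLt; omega⟩,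
      Fin.ext (by rw [u0_val]; simp; omega)⟩
  · rintro ⟨j, rfl⟩
    exact lt_u0 y j

lemma filter_lt_eq_image1 {n : ℕ} (y : Fin (n+1)) :
    univ.filter (fun x : Fin (n+1) => x < y) = univ.image (u1 y) := by
  ext z
  simp only [mem_filter, mem_univ, true_and, mem_image]
  constructor
  · intro hz
    have hz' : (z:ℕ) < (y:ℕ) := hz
    exact ⟨⟨(z:ℕ), hz'⟩, Fin.ext (by rw [u1_val])⟩
  · rintro ⟨j, rfl⟩
    exact u1_lt y j

lemma comb {m : ℕ} (f : Fin m → ℝ) (hf : ∀ x, f x = 0 ∨ f x = 1) :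
    ∑ y : Fin m, (if f y = 0 then ∑ x ∈ univ.filter (fun x => y < x), f x
      else ((m : ℝ) - ((y:ℕ) : ℝ)) + ∑ x ∈ univ.filter (fun x => x < y), f x)
      = (m : ℝ) * ∑ x, f x := by
  have hterm : ∀ y : Fin m,
      (if f y = 0 then ∑ x ∈ univ.filter (fun x => y < x), f x
        else ((m : ℝ) - ((y:ℕ):ℝ)) + ∑ x ∈ univ.filter (fun x => x < y), f x)
      = (∑ x, f x)
        + ((∑ x, (if y ≤ x then (1 - f x) * f y else 0))
           - (∑ x, (if x ≤ y then f x * (1 - f y) else 0))) := by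
    intro y
    have hsplit1 : ∑ x ∈ univ.filter (fun x => x ≤ y), f x
        + ∑ x ∈ univ.filter (fun x => ¬ x ≤ y), f x = ∑ x, f x :=
      Finset.sum_filter_add_sum_filter_not univ _ f
    have hsplit2 : ∑ x ∈ univ.filter (fun x => y ≤ x), f x
        + ∑ x ∈ univ.filter (fun x => ¬ y ≤ x), f x = ∑ x, f x :=
      Finset.sum_filter_add_sum_filter_not univ _ f
    have hgt : univ.filter (fun x : Fin m => ¬ x ≤ y) = univ.filter (fun x => y < x) := by
      apply Finset.filter_congr; intro x _; simp [not_le]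
    have hlt : univ.filter (fun x : Fin m => ¬ y ≤ x) = univ.filter (fun x => x < y) := by
      apply Finset.filter_congr; intro x _; simp [not_le]
    rcases hf y with h | h
    · rw [if_pos h, h]
      simp only [mul_zero, ite_self, Finset.sum_const_zero, sub_zero, mul_one]
      rw [← Finset.sum_filter]
      rw [hgt] at hsplit1
      linarith [hsplit1]
    · rw [if_neg (by rw [h]; norm_num), h]
      simp only [mul_one, sub_self, mul_zero, ite_self, Finset.sum_const_zero, sub_zero]
      rw [← Finset.sum_filter, Finset.sum_sub_distrib, Finset.sum_const, card_ge y,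
        nsmul_eq_mul, mul_one]
      rw [hlt] at hsplit2
      have hyle : (y:ℕ) ≤ m := le_of_lt y.isLt
      have hcast : ((m - (y:ℕ) : ℕ) : ℝ) = (m : ℝ) - ((y:ℕ):ℝ) := by
        push_cast [Nat.cast_sub hyle]
        ring
      rw [hcast]
      linarith [hsplit2]
  rw [Finset.sum_congr rfl (fun y _ => hterm y)]
  have hswap : (∑ y : Fin m, ∑ x : Fin m, (if y ≤ x then (1 - f x) * f y else 0))
      = ∑ y : Fin m, ∑ x : Fin m, (if x ≤ y then f x * (1 - f y) else 0) := by
    rw [Finset.sum_comm]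
    refine Finset.sum_congr rfl fun y _ => Finset.sum_congr rfl fun x _ => ?_
    rw [mul_comm]
  rw [Finset.sum_add_distrib, Finset.sum_sub_distrib, hswap, sub_self, add_zero,
    Finset.sum_const, card_univ, Fintype.card_fin, nsmul_eq_mul]

lemma key : ∀ (m : ℕ) (f : Fin m → ℝ), (∀ x, f x = 0 ∨ f x = 1) →
    (∑ π : Equiv.Perm (Fin m), ∑ x : Fin m, greedyMono f π x)
      = (Nat.factorial m : ℝ) * ∑ x : Fin m, f x := by
  intro m
  induction m using Nat.strong_induction_on with
  | _ m ihm =>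
    cases m with
    | zero =>
      intro f hf
      simp
    | succ n =>
      intro f hf
      have hre : (∑ π : Equiv.Perm (Fin (n+1)), ∑ x, greedyMono f π x)
          = ∑ p : Fin (n+1) × Equiv.Perm (Fin n),
              ∑ x, greedyMono f (Equiv.Perm.decomposeFin.symm p) x :=
        (Equiv.sum_comp Equiv.Perm.decomposeFin.symm
          (fun π => ∑ x, greedyMono f π x)).symm
      rw [hre, Fintype.sum_prod_type]
      have hinner : ∀ y : Fin (n+1),
          (∑ e : Equiv.Perm (Fin n),
              ∑ x, greedyMono f (Equiv.Perm.decomposeFin.symm (y, e)) x)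
          = (Nat.factorial n : ℝ) *
            (if f y = 0 then ∑ x ∈ univ.filter (fun x => y < x), f x
             else (((n+1 : ℕ) : ℝ) - ((y:ℕ):ℝ)) + ∑ x ∈ univ.filter (fun x => x < y), f x) := by
        intro y
        rcases hf y with hy | hy
        · rw [if_pos hy]
          set f' : Fin (n - (y:ℕ)) → ℝ := fun j => f (u0 y j) with hf'
          have hx : ∀ e : Equiv.Perm (Fin n),
              ∑ x, greedyMono f (Equiv.Perm.decomposeFin.symm (y, e)) x
                = ∑ j : Fin (n - (y:ℕ)), greedyMono f' (subPerm (pinv0 y) e) j := by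
            intro e
            obtain ⟨hA, hB⟩ := caseR0 f hf y hy e
            have h1 : ∑ x, greedyMono f (Equiv.Perm.decomposeFin.symm (y, e)) x
                = ∑ x ∈ univ.filter (fun x => y < x),
                    greedyMono f (Equiv.Perm.decomposeFin.symm (y, e)) x := by
              rw [Finset.sum_filter]
              refine Finset.sum_congr rfl fun x _ => ?_
              by_cases hxy : y < x
              · rw [if_pos hxy]
              · rw [if_neg hxy, hA x (not_lt.mp hxy)]
            rw [h1, filter_gt_eq_image0 y,
              Finset.sum_image (fun a _ c _ h => u0_inj y h)]
            exact Finset.sum_congr rfl fun j _ => hB j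
          rw [Finset.sum_congr rfl (fun e _ => hx e)]
          have hcnt := sum_subPerm (pinv0 y)
            (fun σ => ∑ j : Fin (n - (y:ℕ)), greedyMono f' σ j)
          have hih := ihm (n - (y:ℕ)) (by omega) f' (fun j => hf (u0 y j))
          rw [hih] at hcnt
          have hbne : ((Nat.factorial (n - (y:ℕ)) : ℕ) : ℝ) ≠ 0 :=
            Nat.cast_ne_zero.mpr (Nat.factorial_ne_zero _)
          have hX : (∑ e : Equiv.Perm (Fin n),
                ∑ j : Fin (n - (y:ℕ)), greedyMono f' (subPerm (pinv0 y) e) j)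
              = (Nat.factorial n : ℝ) * ∑ j, f' j := by
            apply mul_left_cancel₀ hbne
            rw [hcnt]
            ring
          rw [hX]
          congr 1
          rw [filter_gt_eq_image0 y, Finset.sum_image (fun a _ c _ h => u0_inj y h)]
        · rw [if_neg (by rw [hy]; norm_num)]
          set f' : Fin (y:ℕ) → ℝ := fun j => f (u1 y j) with hf'
          have hx : ∀ e : Equiv.Perm (Fin n),
              ∑ x, greedyMono f (Equiv.Perm.decomposeFin.symm (y, e)) x
                = (((n+1 : ℕ) : ℝ) - ((y:ℕ):ℝ))
                  + ∑ j : Fin (y:ℕ), greedyMono f' (subPerm (pinv1 y) e) j := by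
            intro e
            obtain ⟨hA, hB⟩ := caseR1 f hf y hy e
            have hsplit := Finset.sum_filter_add_sum_filter_not univ (fun x => x < y)
              (fun x => greedyMono f (Equiv.Perm.decomposeFin.symm (y, e)) x)
            have h2 : ∑ x ∈ univ.filter (fun x => ¬ x < y),
                greedyMono f (Equiv.Perm.decomposeFin.symm (y, e)) x
                = ((n+1 : ℕ) : ℝ) - ((y:ℕ):ℝ) := by
              rw [Finset.sum_congr rfl
                (fun x hx => hA x (not_lt.mp (Finset.mem_filter.mp hx).2))]
              rw [Finset.sum_const, nsmul_eq_mul, mul_one]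
              have hfe : univ.filter (fun x : Fin (n+1) => ¬ x < y)
                  = univ.filter (fun x => y ≤ x) := by
                apply Finset.filter_congr; intro x _; simp [not_lt]
              rw [hfe, card_ge]
              have hyle : (y:ℕ) ≤ n + 1 := le_of_lt y.isLt
              push_cast [Nat.cast_sub hyle]
              ring
            have h1 : ∑ x ∈ univ.filter (fun x => x < y),
                greedyMono f (Equiv.Perm.decomposeFin.symm (y, e)) x
                = ∑ j : Fin (y:ℕ), greedyMono f' (subPerm (pinv1 y) e) j := by
              rw [filter_lt_eq_image1 y,
                Finset.sum_image (fun a _ c _ h => u1_inj y h)]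
              exact Finset.sum_congr rfl fun j _ => hB j
            rw [← hsplit, h1, h2]
            ring
          rw [Finset.sum_congr rfl (fun e _ => hx e)]
          rw [Finset.sum_add_distrib, Finset.sum_const, card_univ, Fintype.card_perm,
            Fintype.card_fin, nsmul_eq_mul]
          have hcnt := sum_subPerm (pinv1 y)
            (fun σ => ∑ j : Fin (y:ℕ), greedyMono f' σ j)
          have hih := ihm (y:ℕ) y.isLt f' (fun j => hf (u1 y j))
          rw [hih] at hcnt
          have hbne : ((Nat.factorial (y:ℕ) : ℕ) : ℝ) ≠ 0 :=
            Nat.cast_ne_zero.mpr (Nat.factorial_ne_zero _)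
          have hX : (∑ e : Equiv.Perm (Fin n),
                ∑ j : Fin (y:ℕ), greedyMono f' (subPerm (pinv1 y) e) j)
              = (Nat.factorial n : ℝ) * ∑ j, f' j := by
            apply mul_left_cancel₀ hbne
            rw [hcnt]
            ring
          rw [hX]
          have hback : ∑ x ∈ univ.filter (fun x : Fin (n+1) => x < y), f x
              = ∑ j : Fin (y:ℕ), f' j := by
            rw [filter_lt_eq_image1 y, Finset.sum_image (fun a _ c _ h => u1_inj y h)]
          rw [hback]
          ring
      rw [Finset.sum_congr rfl (fun y _ => hinner y), ← Finset.mul_sum, comb f hf]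
      rw [← mul_assoc]
      congr 1
      rw [Nat.factorial_succ]
      push_cast
      ring

end Assembly


/-- for boolean-valued `f`, the greedy monotonization along a
uniformly random permutation preserves the expectation of `f` under the uniform
distribution on `Fin m`: `E_{π,x}[M^π_f(x)] = E_x[f(x)]`. -/
theorem stmt2 {m : ℕ} (hm : 0 < m) (f : Fin m → ℝ) (hf : ∀ x, f x = 0 ∨ f x = 1) :
    (∑ π : Equiv.Perm (Fin m), ∑ x : Fin m, greedyMono f π x) /
        ((Fintype.card (Equiv.Perm (Fin m)) : ℝ) * m) =
      (∑ x : Fin m, f x) / m := by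
  rw [key m f hf, Fintype.card_perm, Fintype.card_fin]
  have h1 : ((Nat.factorial m : ℕ) : ℝ) ≠ 0 :=
    Nat.cast_ne_zero.mpr (Nat.factorial_ne_zero _)
  rw [mul_div_mul_left _ _ h1]
end

section
/- Let f : Fin m → {0,1} and fix an interval {l,...,r} ⊆ Fin m. Define V(l,r) = Σ_{x=l}^{r} f(x) − Σ_{x=l}^{r} E[M(x)], where M is produced by the recursive randomized procedure: choose y uniformly from {l,...,r}; if f(y)=0 set M=0 on {l,...,y} and recurse on {y+1,...,r}; if f(y)=1 set M=1 on {y,...,r} and recurse on {l,...,y-1}. Then V(l,r) = 0 for every interval. -/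
open Finset
open scoped Classical

/-- Expected total value assigned by the recursive randomized monotonization
procedure on the interval `{l, …, r}` (with enough `fuel`): a pivot `y` is
chosen uniformly from `{l, …, r}`; if `f y = 0` the procedure assigns `0` on
`{l, …, y}` and recurses on `{y+1, …, r}`; if `f y = 1` it assigns `1` on
`{y, …, r}` (total value `r - y + 1`) and recurses on `{l, …, y-1}`. -/
noncomputable def expSumAux (f : ℕ → ℝ) : ℕ → ℕ → ℕ → ℝ
  | 0, _, _ => 0
  | fuel + 1, l, r =>
    if l ≤ r then
      (∑ y ∈ Finset.Icc l r,
          (if f y = 0 then expSumAux f fuel (y + 1) r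
           else ((r : ℝ) - y + 1) + (if l + 1 ≤ y then expSumAux f fuel l (y - 1) else 0)))
        / ((r : ℝ) + 1 - l)
    else 0

/-- Expected value of `∑_{x=l}^{r} M(x)` for the recursive randomized
monotonization procedure. -/
noncomputable def expSum (f : ℕ → ℝ) (l r : ℕ) : ℝ := expSumAux f (r + 1 - l) l r

private lemma aux_zero (f : ℕ → ℝ) (fuel l r : ℕ) (h : r < l) :
    expSumAux f fuel l r = 0 := by
  cases fuel with
  | zero => rfl
  | succ n => simp [expSumAux, Nat.not_le.mpr h]

private lemma aux_fuel (f : ℕ → ℝ) :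
    ∀ n l r fuel fuel', r - l ≤ n → r + 1 - l ≤ fuel → r + 1 - l ≤ fuel' →
      expSumAux f fuel l r = expSumAux f fuel' l r := by
  intro n
  induction n using Nat.strong_induction_on with
  | _ n ih =>
    intro l r fuel fuel' hn hfu hfu'
    rcases Nat.lt_or_ge r l with h | h
    · rw [aux_zero f _ _ _ h, aux_zero f _ _ _ h]
    · obtain ⟨a, rfl⟩ : ∃ a, fuel = a + 1 := ⟨fuel - 1, by omega⟩
      obtain ⟨b, rfl⟩ : ∃ b, fuel' = b + 1 := ⟨fuel' - 1, by omega⟩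
      simp only [expSumAux, if_pos (show l ≤ r by omega)]
      congr 1
      apply Finset.sum_congr rfl
      intro y hy
      simp only [Finset.mem_Icc] at hy
      by_cases h0 : f y = 0
      · simp only [if_pos h0]
        rcases Nat.lt_or_ge r (y + 1) with h2 | h2
        · rw [aux_zero f _ _ _ h2, aux_zero f _ _ _ h2]
        · exact ih (r - (y + 1)) (by omega) (y + 1) r a b (by omega) (by omega) (by omega)
      · simp only [if_neg h0]
        congr 1
        by_cases h1 : l + 1 ≤ y
        · simp only [if_pos h1]
          exact ih (y - 1 - l) (by omega) l (y - 1) a b (by omega) (by omega) (by omega)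
        · simp [h1]

private lemma sum_split (f : ℕ → ℝ) {l y r : ℕ} (hl : l ≤ y) (hy : y ≤ r) :
    ∑ x ∈ Icc l r, f x = (∑ x ∈ Icc l y, f x) + ∑ x ∈ Icc (y + 1) r, f x := by
  rw [← Finset.sum_union]
  · congr 1
    ext x
    simp only [Finset.mem_union, Finset.mem_Icc]
    omega
  · simp only [Finset.disjoint_left, Finset.mem_Icc]
    intro x hx
    omega

private lemma filter_le_eq (l r y : ℕ) (hy : y ≤ r) :
    (Icc l r).filter (fun x => x ≤ y) = Icc l y := by
  ext x
  simp only [Finset.mem_filter, Finset.mem_Icc]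
  omega

private lemma filter_ge_eq (l r y : ℕ) (hy : l ≤ y) :
    (Icc l r).filter (fun x => y ≤ x) = Icc y r := by
  ext x
  simp only [Finset.mem_filter, Finset.mem_Icc]
  omega

private lemma expSum_eq (f : ℕ → ℝ) (hf : ∀ x, f x = 0 ∨ f x = 1) :
    ∀ n l r, r - l ≤ n → expSum f l r = ∑ x ∈ Icc l r, f x := by
  intro n
  induction n using Nat.strong_induction_on with
  | _ n ih =>
    intro l r hn
    rcases Nat.lt_or_ge r l with h | h
    · rw [expSum, aux_zero f _ _ _ h, Finset.Icc_eq_empty (by omega), Finset.sum_empty]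
    · rw [expSum]
      obtain ⟨a, ha⟩ : ∃ a, r + 1 - l = a + 1 := ⟨r - l, by omega⟩
      have haa : a = r - l := by omega
      rw [ha]
      simp only [expSumAux, if_pos h]
      -- rewrite recursive calls to sums
      have hstep : ∀ y ∈ Icc l r,
          (if f y = 0 then expSumAux f a (y + 1) r
           else ((r : ℝ) - y + 1) + (if l + 1 ≤ y then expSumAux f a l (y - 1) else 0))
          = (if f y = 0 then ∑ x ∈ Icc (y + 1) r, f x
             else ((r : ℝ) - y + 1) + (if l + 1 ≤ y then ∑ x ∈ Icc l (y - 1), f x else 0)) := by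
        intro y hy
        simp only [Finset.mem_Icc] at hy
        by_cases h0 : f y = 0
        · simp only [if_pos h0]
          rcases Nat.lt_or_ge r (y + 1) with h2 | h2
          · rw [aux_zero f _ _ _ h2, Finset.Icc_eq_empty (by omega), Finset.sum_empty]
          · have e1 : expSumAux f a (y + 1) r = expSum f (y + 1) r := by
              rw [expSum]
              exact aux_fuel f (r - (y + 1)) _ _ _ _ le_rfl (by omega) le_rfl
            rw [e1, ih (r - (y + 1)) (by omega) (y + 1) r le_rfl]
        · simp only [if_neg h0]
          congr 1
          by_cases h1 : l + 1 ≤ y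
          · simp only [if_pos h1]
            have e1 : expSumAux f a l (y - 1) = expSum f l (y - 1) := by
              rw [expSum]
              exact aux_fuel f (y - 1 - l) _ _ _ _ le_rfl (by omega) le_rfl
            rw [e1, ih (y - 1 - l) (by omega) l (y - 1) le_rfl]
          · simp [h1]
      rw [Finset.sum_congr rfl hstep]
      have hpos : (0:ℝ) < (r:ℝ) + 1 - l := by
        have : (l:ℝ) ≤ r := Nat.cast_le.mpr h
        linarith
      rw [div_eq_iff (ne_of_gt hpos)]
      have hconst : ∑ _y ∈ Icc l r, (∑ x ∈ Icc l r, f x)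
          = (∑ x ∈ Icc l r, f x) * ((r:ℝ) + 1 - l) := by
        rw [Finset.sum_const, Nat.card_Icc, nsmul_eq_mul, Nat.cast_sub (by omega)]
        push_cast
        ring
      rw [← hconst, ← sub_eq_zero, ← Finset.sum_sub_distrib]
      have key : ∀ y ∈ Icc l r,
          ((if f y = 0 then ∑ x ∈ Icc (y + 1) r, f x
           else ((r : ℝ) - y + 1) + (if l + 1 ≤ y then ∑ x ∈ Icc l (y - 1), f x else 0))
            - ∑ x ∈ Icc l r, f x)
          = ∑ x ∈ Icc l r,
              ((if f x = 0 ∧ y ≤ x ∧ f y = 1 then (1:ℝ) else 0)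
               - (if f x = 1 ∧ x ≤ y ∧ f y = 0 then (1:ℝ) else 0)) := by
        intro y hy
        simp only [Finset.mem_Icc] at hy
        rw [Finset.sum_sub_distrib]
        by_cases h0 : f y = 0
        · have hq : ∑ x ∈ Icc l r, (if f x = 0 ∧ y ≤ x ∧ f y = 1 then (1:ℝ) else 0) = 0 := by
            apply Finset.sum_eq_zero
            intro x hx
            have hne : ¬ f y = 1 := by rw [h0]; norm_num
            simp [hne]
          have hp : ∑ x ∈ Icc l r, (if f x = 1 ∧ x ≤ y ∧ f y = 0 then (1:ℝ) else 0)
              = ∑ x ∈ Icc l y, f x := by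
            rw [← filter_le_eq l r y hy.2, Finset.sum_filter]
            apply Finset.sum_congr rfl
            intro x hx
            by_cases hxy : x ≤ y
            · rcases hf x with h1 | h1 <;> simp [h1, h0, hxy]
            · simp [hxy]
          rw [hq, hp, if_pos h0, sum_split f hy.1 hy.2]
          ring
        · have h1 : f y = 1 := (hf y).resolve_left h0
          have hp : ∑ x ∈ Icc l r, (if f x = 1 ∧ x ≤ y ∧ f y = 0 then (1:ℝ) else 0) = 0 := by
            apply Finset.sum_eq_zero
            intro x hx
            simp [h0]
          have hq : ∑ x ∈ Icc l r, (if f x = 0 ∧ y ≤ x ∧ f y = 1 then (1:ℝ) else 0)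
              = ∑ x ∈ Icc y r, (1 - f x) := by
            rw [← filter_ge_eq l r y hy.1, Finset.sum_filter]
            apply Finset.sum_congr rfl
            intro x hx
            by_cases hxy : y ≤ x
            · rcases hf x with h2 | h2 <;> simp [h2, h1, hxy]
            · simp [hxy]
          have hq2 : ∑ x ∈ Icc y r, (1 - f x) = ((r:ℝ) - y + 1) - ∑ x ∈ Icc y r, f x := by
            rw [Finset.sum_sub_distrib, Finset.sum_const, Nat.card_Icc, nsmul_eq_mul, mul_one,
              Nat.cast_sub (by omega)]
            push_cast
            ring
          rw [hp, hq, hq2, if_neg h0, sub_zero]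
          by_cases h2 : l + 1 ≤ y
          · rw [if_pos h2]
            have hsp : ∑ x ∈ Icc l r, f x
                = (∑ x ∈ Icc l (y - 1), f x) + ∑ x ∈ Icc (y - 1 + 1) r, f x :=
              sum_split f (by omega) (by omega)
            rw [show y - 1 + 1 = y by omega] at hsp
            linarith
          · rw [if_neg h2]
            have hyl : y = l := by omega
            subst hyl
            ring
      rw [Finset.sum_congr rfl key]
      have hswap : (∑ y ∈ Icc l r, ∑ x ∈ Icc l r,
            (if f x = 0 ∧ y ≤ x ∧ f y = 1 then (1:ℝ) else 0))
          = ∑ y ∈ Icc l r, ∑ x ∈ Icc l r,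
            (if f x = 1 ∧ x ≤ y ∧ f y = 0 then (1:ℝ) else 0) := by
        rw [Finset.sum_comm]
        apply Finset.sum_congr rfl
        intro y _
        apply Finset.sum_congr rfl
        intro x _
        exact if_congr (by tauto) rfl rfl
      simp only [Finset.sum_sub_distrib]
      rw [hswap, sub_self]

/-- for boolean-valued `f`,
`V(l,r) = Σ_{x=l}^{r} f(x) − Σ_{x=l}^{r} E[M(x)] = 0` for every interval. -/
theorem stmt3 (f : ℕ → ℝ) (hf : ∀ x, f x = 0 ∨ f x = 1) (l r : ℕ) :
    (∑ x ∈ Finset.Icc l r, f x) - expSum f l r = 0 := by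
  rw [expSum_eq f hf (r - l) l r le_rfl, sub_self]
end

section
/- Let f, g : Fin m → [0,1] with f(x) ≤ g(x) for all x, and let π be any permutation of Fin m. Let M^π_f and M^π_g be the greedy monotonizations of f and g along the same permutation π. Then M^π_f(x) ≤ M^π_g(x) for all x ∈ Fin m. -/
open Finset

/-- Auxiliary order relation on optional values. -/
def ORel (o₁ o₂ : Option ℝ) : Prop :=
  (o₁ = none ∧ o₂ = none) ∨ ∃ a b, o₁ = some a ∧ o₂ = some b ∧ a ≤ b

/-- Pointwise relation between two states. -/
def SRel {m : ℕ} (s t : Fin m → Option ℝ) : Prop := ∀ y, ORel (s y) (t y)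

lemma SRel.isSome_eq {m : ℕ} {s t : Fin m → Option ℝ} (h : SRel s t) (y : Fin m) :
    (s y).isSome = (t y).isSome := by
  rcases h y with ⟨h1, h2⟩ | ⟨a, b, h1, h2, _⟩ <;> simp [h1, h2]


noncomputable def clampH (a : ℝ) (H : Option ℝ) : ℝ :=
  match H with | some hv => min a hv | none => a

noncomputable def clampL (a : ℝ) (L : Option ℝ) : ℝ :=
  match L with | some lv => max a lv | none => a

lemma clampH_mono {a b : ℝ} (hab : a ≤ b) {H₁ H₂ : Option ℝ} (h : ORel H₁ H₂) :
    clampH a H₁ ≤ clampH b H₂ := by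
  rcases h with ⟨e1, e2⟩ | ⟨u, v, e1, e2, huv⟩ <;> subst e1 <;> subst e2 <;>
    simp only [clampH]
  · exact hab
  · exact min_le_min hab huv

lemma clampL_mono {a b : ℝ} (hab : a ≤ b) {L₁ L₂ : Option ℝ} (h : ORel L₁ L₂) :
    clampL a L₁ ≤ clampL b L₂ := by
  rcases h with ⟨e1, e2⟩ | ⟨u, v, e1, e2, huv⟩ <;> subst e1 <;> subst e2 <;>
    simp only [clampL]
  · exact hab
  · exact max_le_max hab huv

lemma srel_step {m : ℕ} {f g : Fin m → ℝ} (hfg : ∀ x, f x ≤ g x)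
    {s t : Fin m → Option ℝ} (h : SRel s t) (p : Fin m) :
    SRel (greedyStep f s p) (greedyStep g t p) := by
  have hB : Finset.univ.filter (fun y => y < p ∧ (s y).isSome)
      = Finset.univ.filter (fun y => y < p ∧ (t y).isSome) := by
    apply Finset.filter_congr; intro y _; rw [h.isSome_eq y]
  have hA : Finset.univ.filter (fun y => p < y ∧ (s y).isSome)
      = Finset.univ.filter (fun y => p < y ∧ (t y).isSome) := by
    apply Finset.filter_congr; intro y _; rw [h.isSome_eq y]
  intro y
  unfold greedyStep
  simp only [← hB, ← hA]
  by_cases hy : y = p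
  · subst hy
    simp only [if_pos rfl]
    right
    set B := Finset.univ.filter (fun z => z < y ∧ (s z).isSome) with hBdef
    set A := Finset.univ.filter (fun z => y < z ∧ (s z).isSome) with hAdef
    have hL : ORel (if h : B.Nonempty then s (B.max' h) else none)
        (if h : B.Nonempty then t (B.max' h) else none) := by
      split
      · exact h _
      · exact Or.inl ⟨rfl, rfl⟩
    have hH : ORel (if h : A.Nonempty then s (A.min' h) else none)
        (if h : A.Nonempty then t (A.min' h) else none) := by
      split
      · exact h _
      · exact Or.inl ⟨rfl, rfl⟩
    set Ls := (if h : B.Nonempty then s (B.max' h) else none) with hLs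
    set Lt := (if h : B.Nonempty then t (B.max' h) else none) with hLt
    set Hs := (if h : A.Nonempty then s (A.min' h) else none) with hHs
    set Ht := (if h : A.Nonempty then t (A.min' h) else none) with hHt
    clear_value Ls Lt Hs Ht
    refine ⟨_, _, rfl, rfl, ?_⟩
    show clampL (clampH (f y) Hs) Ls ≤ clampL (clampH (g y) Ht) Lt
    exact clampL_mono (clampH_mono (hfg y) hH) hL
  · simp only [if_neg hy]
    exact h y

lemma srel_state {m : ℕ} {f g : Fin m → ℝ} (hfg : ∀ x, f x ≤ g x)
    (π : Equiv.Perm (Fin m)) (n : ℕ) :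
    SRel (greedyState f π n) (greedyState g π n) := by
  induction n with
  | zero => intro y; exact Or.inl ⟨rfl, rfl⟩
  | succ n ih =>
    unfold greedyState
    split
    · exact srel_step hfg ih _
    · exact ih

/-- the greedy monotonization operator is monotone with respect
to pointwise ordering of input functions, when the same permutation is used. -/
theorem stmt5 {m : ℕ} (f g : Fin m → ℝ)
    (hf : ∀ x, f x ∈ Set.Icc (0:ℝ) 1) (hg : ∀ x, g x ∈ Set.Icc (0:ℝ) 1)
    (hfg : ∀ x, f x ≤ g x) (π : Equiv.Perm (Fin m)) :
    ∀ x, greedyMono f π x ≤ greedyMono g π x := by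
  intro x
  rcases srel_state hfg π m x with ⟨h1, h2⟩ | ⟨a, b, h1, h2, hab⟩
  · simp [greedyMono, h1, h2]
  · simp [greedyMono, h1, h2, hab]
end

section
/- For boolean-valued f : Fin m → {0,1}, the greedy monotonization along a fixed permutation π commutes with thresholding: for any f : Fin m → [0,1] and any t ∈ [0,1), the indicator of {M^π_f > t} equals M^π_{[f>t]}, where [f>t](x) = 1 if f(x) > t and 0 otherwise. -/
open Finset

noncomputable def thr (t r : ℝ) : ℝ := if t < r then 1 else 0

lemma thr_mono (t : ℝ) : Monotone (thr t) := by
  intro a b hab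
  unfold thr
  split_ifs with h1 h2
  · exact le_refl 1
  · exact absurd (lt_of_lt_of_le h1 hab) h2
  · norm_num
  · exact le_refl 0

lemma step_comm {m : ℕ} (f : Fin m → ℝ) (t : ℝ) (s : Fin m → Option ℝ) (p : Fin m) :
    greedyStep (fun y => thr t (f y)) (fun y => (s y).map (thr t)) p
      = fun y => ((greedyStep f s p y).map (thr t)) := by
  unfold greedyStep
  simp only [Option.isSome_map]
  funext y
  by_cases hy : y = p
  · simp only [hy, if_pos rfl, ite_true, Option.map_some]
    congr 1
    set B := Finset.univ.filter (fun z => z < p ∧ (s z).isSome) with hB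
    set A := Finset.univ.filter (fun z => p < z ∧ (s z).isSome) with hA
    by_cases hAne : A.Nonempty <;> by_cases hBne : B.Nonempty <;>
      (simp only [hA, hB] at hAne hBne; simp only [dif_pos, dif_neg, hAne, hBne])
    · rcases Option.isSome_iff_exists.mp (Finset.mem_filter.mp (Finset.min'_mem _ hAne)).2.2 with ⟨hv, hhv⟩
      rcases Option.isSome_iff_exists.mp (Finset.mem_filter.mp (Finset.max'_mem _ hBne)).2.2 with ⟨lv, hlv⟩
      simp [hAne, hBne, hhv, hlv, ← (thr_mono t).map_min, ← (thr_mono t).map_max]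
    · rcases Option.isSome_iff_exists.mp (Finset.mem_filter.mp (Finset.min'_mem _ hAne)).2.2 with ⟨hv, hhv⟩
      simp [hAne, hBne, hhv, ← (thr_mono t).map_min]
    · rcases Option.isSome_iff_exists.mp (Finset.mem_filter.mp (Finset.max'_mem _ hBne)).2.2 with ⟨lv, hlv⟩
      simp [hAne, hBne, hlv, ← (thr_mono t).map_max]
    · simp [hAne, hBne]
  · simp [hy]

lemma state_comm {m : ℕ} (f : Fin m → ℝ) (π : Equiv.Perm (Fin m)) (t : ℝ) (n : ℕ) :
    greedyState (fun y => thr t (f y)) π n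
      = fun x => (greedyState f π n x).map (thr t) := by
  induction n with
  | zero => funext x; simp [greedyState]
  | succ n ih =>
    by_cases h : n < m
    · simp only [greedyState, dif_pos h, ih, step_comm]
    · simp only [greedyState, dif_neg h, ih]

open scoped Classical in
/-- the greedy monotonization commutes with thresholding: the
indicator of `{M^π_f > t}` equals `M^π_{[f > t]}`. -/
theorem stmt6 {m : ℕ} (f : Fin m → ℝ) (hf : ∀ x, f x ∈ Set.Icc (0:ℝ) 1)
    (π : Equiv.Perm (Fin m)) (t : ℝ) (ht : t ∈ Set.Ico (0:ℝ) 1) :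
    ∀ x, (if t < greedyMono f π x then (1:ℝ) else 0) =
      greedyMono (fun y => if t < f y then (1:ℝ) else 0) π x := by
  intro x
  have hs := congrFun (state_comm f π t m) x
  simp only [show (fun y => thr t (f y)) = (fun y => if t < f y then (1:ℝ) else 0) from rfl] at hs
  unfold greedyMono
  rw [hs]
  cases hgs : greedyState f π m x with
  | none => simp [thr, not_lt.mpr ht.1]
  | some v => simp [thr]
end

section
/- For any f : Fin m → [0,1] and permutation π, the greedy monotonization satisfies the layer-cake identity M^π_f(x) = ∫_0^1 M^π_{[f>t]}(x) dt for every x ∈ Fin m, where [f>t] is the indicator function of {y : f(y) > t}. -/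
open Finset

noncomputable def chi (t v : ℝ) : ℝ := if t < v then 1 else 0

lemma chi_mono (t : ℝ) : Monotone (chi t) := by
  intro a b hab
  unfold chi
  by_cases h1 : t < a
  · rw [if_pos h1, if_pos (lt_of_lt_of_le h1 hab)]
  · rw [if_neg h1]
    split_ifs <;> norm_num

lemma greedyStep_map {m : ℕ} (t : ℝ) (f : Fin m → ℝ) (s : Fin m → Option ℝ) (p : Fin m) :
    greedyStep (fun y => chi t (f y)) (fun y => Option.map (chi t) (s y)) p
      = fun y => Option.map (chi t) (greedyStep f s p y) := by
  unfold greedyStep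
  simp only [Option.isSome_map]
  funext z
  by_cases hz : z = p
  · rw [if_pos hz, if_pos hz, Option.map_some]
    congr 1
    by_cases hB : (Finset.filter (fun y => y < p ∧ (s y).isSome = true) Finset.univ).Nonempty
    · by_cases hA : (Finset.filter (fun y => p < y ∧ (s y).isSome = true) Finset.univ).Nonempty
      · rw [dif_pos hB, dif_pos hA, dif_pos hB, dif_pos hA]
        rcases hL : s ((Finset.filter (fun y => y < p ∧ (s y).isSome = true) Finset.univ).max' hB)
            with _ | lv <;>
          rcases hH : s ((Finset.filter (fun y => p < y ∧ (s y).isSome = true) Finset.univ).min' hA)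
            with _ | hv <;>
          simp only [hL, hH, Option.map_some, Option.map_none,
            (chi_mono t).map_min, (chi_mono t).map_max]
      · rw [dif_pos hB, dif_neg hA, dif_pos hB, dif_neg hA]
        rcases hL : s ((Finset.filter (fun y => y < p ∧ (s y).isSome = true) Finset.univ).max' hB)
            with _ | lv <;>
          simp only [hL, Option.map_some, Option.map_none,
            (chi_mono t).map_min, (chi_mono t).map_max]
    · by_cases hA : (Finset.filter (fun y => p < y ∧ (s y).isSome = true) Finset.univ).Nonempty
      · rw [dif_neg hB, dif_pos hA, dif_neg hB, dif_pos hA]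
        rcases hH : s ((Finset.filter (fun y => p < y ∧ (s y).isSome = true) Finset.univ).min' hA)
            with _ | hv <;>
          simp only [hH, Option.map_some, Option.map_none,
            (chi_mono t).map_min, (chi_mono t).map_max]
      · rw [dif_neg hB, dif_neg hA, dif_neg hB, dif_neg hA]
  · rw [if_neg hz, if_neg hz]

lemma greedyState_map {m : ℕ} (t : ℝ) (f : Fin m → ℝ) (π : Equiv.Perm (Fin m)) (n : ℕ) :
    greedyState (fun y => chi t (f y)) π n
      = fun y => Option.map (chi t) (greedyState f π n y) := by
  induction n with
  | zero => funext y; simp [greedyState]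
  | succ n ih =>
    by_cases h : n < m
    · show greedyState _ π (n+1) = _
      unfold greedyState
      rw [dif_pos h, dif_pos h, ih, greedyStep_map]
    · show greedyState _ π (n+1) = _
      unfold greedyState
      rw [dif_neg h, dif_neg h, ih]

lemma greedyStep_mem {m : ℕ} (f : Fin m → ℝ) (s : Fin m → Option ℝ) (p : Fin m)
    (hf : ∀ x, f x ∈ Set.Icc (0:ℝ) 1)
    (hs : ∀ y v, s y = some v → v ∈ Set.Icc (0:ℝ) 1) :
    ∀ y v, greedyStep f s p y = some v → v ∈ Set.Icc (0:ℝ) 1 := by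
  intro y v
  unfold greedyStep
  by_cases hy : y = p
  · rw [if_pos hy]
    have hfp := hf p
    simp only [Set.mem_Icc] at hfp ⊢
    by_cases hB : (Finset.filter (fun y => y < p ∧ (s y).isSome = true) Finset.univ).Nonempty
    · by_cases hA : (Finset.filter (fun y => p < y ∧ (s y).isSome = true) Finset.univ).Nonempty
      · rw [dif_pos hB, dif_pos hA]
        rcases hL : s ((Finset.filter (fun y => y < p ∧ (s y).isSome = true) Finset.univ).max' hB)
            with _ | lv <;>
          rcases hH : s ((Finset.filter (fun y => p < y ∧ (s y).isSome = true) Finset.univ).min' hA)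
            with _ | hv <;>
          intro h <;> injection h with h <;> subst h
        · exact hfp
        · have := hs _ _ hH; simp only [Set.mem_Icc] at this
          constructor <;> simp [le_min_iff, min_le_iff] <;> tauto
        · have := hs _ _ hL; simp only [Set.mem_Icc] at this
          constructor <;> simp [le_max_iff, max_le_iff] <;> tauto
        · have h1 := hs _ _ hL; have h2 := hs _ _ hH
          simp only [Set.mem_Icc] at h1 h2
          constructor <;>
            simp [le_max_iff, max_le_iff, le_min_iff, min_le_iff] <;> tauto
      · rw [dif_pos hB, dif_neg hA]
        rcases hL : s ((Finset.filter (fun y => y < p ∧ (s y).isSome = true) Finset.univ).max' hB)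
            with _ | lv <;> intro h <;> injection h with h <;> subst h
        · exact hfp
        · have := hs _ _ hL; simp only [Set.mem_Icc] at this
          constructor <;> simp [le_max_iff, max_le_iff] <;> tauto
    · by_cases hA : (Finset.filter (fun y => p < y ∧ (s y).isSome = true) Finset.univ).Nonempty
      · rw [dif_neg hB, dif_pos hA]
        rcases hH : s ((Finset.filter (fun y => p < y ∧ (s y).isSome = true) Finset.univ).min' hA)
            with _ | hv <;> intro h <;> injection h with h <;> subst h
        · exact hfp
        · have := hs _ _ hH; simp only [Set.mem_Icc] at this
          constructor <;> simp [le_min_iff, min_le_iff] <;> tauto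
      · rw [dif_neg hB, dif_neg hA]
        intro h; injection h with h; subst h; exact hfp
  · rw [if_neg hy]
    exact hs y v

lemma greedyState_mem {m : ℕ} (f : Fin m → ℝ) (π : Equiv.Perm (Fin m))
    (hf : ∀ x, f x ∈ Set.Icc (0:ℝ) 1) :
    ∀ n y v, greedyState f π n y = some v → v ∈ Set.Icc (0:ℝ) 1 := by
  intro n
  induction n with
  | zero => intro y v h; simp [greedyState] at h
  | succ n ih =>
    intro y v
    unfold greedyState
    by_cases h : n < m
    · rw [dif_pos h]
      exact greedyStep_mem f _ _ hf ih y v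
    · rw [dif_neg h]
      exact ih y v

lemma greedyMono_mem {m : ℕ} (f : Fin m → ℝ) (π : Equiv.Perm (Fin m))
    (hf : ∀ x, f x ∈ Set.Icc (0:ℝ) 1) (x : Fin m) :
    greedyMono f π x ∈ Set.Icc (0:ℝ) 1 := by
  unfold greedyMono
  rcases h : greedyState f π m x with _ | v
  · simp
  · simpa using greedyState_mem f π hf m x v h

lemma greedyMono_map {m : ℕ} (t : ℝ) (ht : 0 ≤ t) (f : Fin m → ℝ) (π : Equiv.Perm (Fin m))
    (x : Fin m) :
    greedyMono (fun y => chi t (f y)) π x = chi t (greedyMono f π x) := by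
  unfold greedyMono
  rw [greedyState_map]
  rcases h : greedyState f π m x with _ | v
  · simp only [h, Option.map_none, Option.getD_none]
    simp [chi, not_lt.2 ht]
  · simp only [h, Option.map_some, Option.getD_some]

lemma integral_chi (a : ℝ) (h0 : 0 ≤ a) (h1 : a ≤ 1) :
    ∫ t in (0:ℝ)..1, chi t a = a := by
  have heq : (fun t => chi t a) = Set.indicator (Set.Iio a) (fun _ => (1:ℝ)) := by
    funext t
    by_cases h : t < a <;> simp [chi, h, Set.indicator, Set.mem_Iio]
  rw [intervalIntegral.integral_of_le zero_le_one, heq,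
    MeasureTheory.integral_indicator measurableSet_Iio,
    MeasureTheory.Measure.restrict_restrict measurableSet_Iio]
  have hset : Set.Iio a ∩ Set.Ioc 0 1 = Set.Ioo 0 a := by
    ext t
    simp only [Set.mem_inter_iff, Set.mem_Iio, Set.mem_Ioc, Set.mem_Ioo]
    constructor
    · rintro ⟨h2, h3, _⟩; exact ⟨h3, h2⟩
    · rintro ⟨h3, h2⟩; exact ⟨h2, h3, le_trans h2.le h1⟩
  rw [hset, MeasureTheory.setIntegral_const]
  simp [Real.volume_Ioo, ENNReal.toReal_ofReal h0, h0]

open scoped Classical in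
/-- layer-cake identity for the greedy monotonization:
`M^π_f(x) = ∫_0^1 M^π_{[f>t]}(x) dt`. -/
theorem stmt7 {m : ℕ} (f : Fin m → ℝ) (hf : ∀ x, f x ∈ Set.Icc (0:ℝ) 1)
    (π : Equiv.Perm (Fin m)) (x : Fin m) :
    greedyMono f π x =
      ∫ t in (0:ℝ)..1, greedyMono (fun y => if t < f y then (1:ℝ) else 0) π x := by
  have ha := greedyMono_mem f π hf x
  have hcong : Set.EqOn (fun t => greedyMono (fun y => if t < f y then (1:ℝ) else 0) π x)
      (fun t => chi t (greedyMono f π x)) (Set.uIcc (0:ℝ) 1) := by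
    intro t htmem
    rw [Set.uIcc_of_le zero_le_one] at htmem
    show greedyMono (fun y => if t < f y then (1:ℝ) else 0) π x = chi t (greedyMono f π x)
    exact greedyMono_map t htmem.1 f π x
  rw [intervalIntegral.integral_congr hcong, integral_chi _ ha.1 ha.2]
end

section
/- Let D be a probability distribution on ℝ and f : ℝ → [0,1]. Partition the support of D into m = 1/ε intervals I_1, ..., I_m each of D-probability ε, and for each i draw x_i from D conditioned on I_i. Define f̃(x) = 0 for x ∈ I_1 and f̃(x) = f(x_{i-1}) for x ∈ I_i with i > 1. Then E_{x∼D}[f̃(x)] ≥ E_{x∼D}[f(x)] − ε. -/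
open MeasureTheory

/-- single-dimensional discretization. The support of the
probability distribution `μ` is partitioned into `m = 1/ε` ordered intervals
`I 0 < I 1 < ⋯ < I (m-1)`, each of probability `ε`.  The function `g = f̃` is
`0` on the lowest interval and, on each interval `I i` with `i > 0`, equals the
expected value of `f` at a random point drawn from `μ` conditioned on
`I (i-1)` (i.e. `ε⁻¹ ∫_{I (i-1)} f dμ`, the expectation over the sampled point
`x_{i-1} ∼ μ|I_{i-1}`).  Then `E[f̃] ≥ E[f] − ε`. -/
theorem stmt8 (μ : Measure ℝ) [IsProbabilityMeasure μ] (ε : ℝ) (hε : 0 < ε)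
    (m : ℕ) (hm : 0 < m) (hmε : (m : ℝ) * ε = 1)
    (f : ℝ → ℝ) (hf : Measurable f) (hf01 : ∀ x, f x ∈ Set.Icc (0:ℝ) 1)
    (I : Fin m → Set ℝ) (hImeas : ∀ i, MeasurableSet (I i))
    (hIdisj : Pairwise (Function.onFun Disjoint I))
    (hIcover : (⋃ i, I i) = Set.univ)
    (hIord : ∀ i j : Fin m, i < j → ∀ a ∈ I i, ∀ b ∈ I j, a < b)
    (hIprob : ∀ i, μ (I i) = ENNReal.ofReal ε)
    (g : ℝ → ℝ)
    (hg0 : ∀ x ∈ I ⟨0, hm⟩, g x = 0)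
    (hgi : ∀ i : Fin m, 0 < (i : ℕ) → ∀ x ∈ I i,
      g x = ε⁻¹ * ∫ y in I ⟨(i : ℕ) - 1, lt_of_le_of_lt (Nat.sub_le _ _) i.isLt⟩, f y ∂μ) :
    ∫ x, g x ∂μ ≥ (∫ x, f x ∂μ) - ε := by
  have hfint : Integrable f μ := by
    refine Integrable.mono' (integrable_const 1) hf.aestronglyMeasurable ?_
    filter_upwards with x
    rw [Real.norm_eq_abs, abs_le]
    exact ⟨by linarith [(hf01 x).1], (hf01 x).2⟩
  set c : Fin m → ℝ := fun i => if (i : ℕ) = 0 then 0 else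
      ε⁻¹ * ∫ y in I ⟨(i : ℕ) - 1, lt_of_le_of_lt (Nat.sub_le _ _) i.isLt⟩, f y ∂μ with hc
  have hgc : ∀ i : Fin m, ∀ x ∈ I i, g x = c i := by
    intro i x hx
    by_cases h : (i : ℕ) = 0
    · have hi0 : i = ⟨0, hm⟩ := Fin.ext h
      simp [hc, h, hg0 x (hi0 ▸ hx)]
    · simp only [hc, h, if_false]
      exact hgi i (Nat.pos_of_ne_zero h) x hx
  have hgG : g = fun x => ∑ i, (I i).indicator (fun _ => c i) x := by
    funext x
    obtain ⟨i, hi⟩ : ∃ i, x ∈ I i := by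
      have hx : x ∈ ⋃ i, I i := hIcover ▸ Set.mem_univ x
      exact Set.mem_iUnion.mp hx
    rw [hgc i x hi, Finset.sum_eq_single i]
    · simp [Set.indicator_of_mem hi]
    · intro j _ hj
      have hxj : x ∉ I j := fun hxj => Set.disjoint_left.mp (hIdisj hj) hxj hi
      simp [Set.indicator_of_notMem hxj]
    · simp
  have hμI : ∀ i, (μ (I i)).toReal = ε := fun i => by
    rw [hIprob i, ENNReal.toReal_ofReal hε.le]
  have hintG : ∀ i : Fin m, Integrable ((I i).indicator (fun _ => c i)) μ :=
    fun i => (integrable_const (c i)).indicator (hImeas i)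
  have hIg : ∫ x, g x ∂μ = ∑ i : Fin m, ε * c i := by
    rw [hgG, integral_finset_sum _ fun i _ => hintG i]
    refine Finset.sum_congr rfl fun i _ => ?_
    rw [integral_indicator_const _ (hImeas i), measureReal_def, hμI i, smul_eq_mul]
  have hIf : ∫ x, f x ∂μ = ∑ i : Fin m, ∫ y in I i, f y ∂μ := by
    rw [← setIntegral_univ, ← hIcover,
      integral_iUnion hImeas hIdisj hfint.integrableOn]
    exact tsum_fintype _
  set F : ℕ → ℝ := fun j => if h : j < m then ∫ y in I ⟨j, h⟩, f y ∂μ else 0 with hF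
  have hF0 : ∀ j, 0 ≤ F j := by
    intro j
    simp only [hF]
    split
    · exact setIntegral_nonneg (hImeas _) fun x _ => (hf01 x).1
    · exact le_refl 0
  have hFε : ∀ j, F j ≤ ε := by
    intro j
    simp only [hF]
    split
    · calc ∫ y in I ⟨j, by assumption⟩, f y ∂μ
          ≤ ∫ _ in I ⟨j, by assumption⟩, (1:ℝ) ∂μ :=
            setIntegral_mono_on hfint.integrableOn
              (integrable_const 1).integrableOn (hImeas _) fun x _ => (hf01 x).2
        _ = ε := by rw [setIntegral_const, measureReal_def, hμI, smul_eq_mul, mul_one]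
    · exact hε.le
  have hsum1 : ∑ i : Fin m, ε * c i
      = ∑ j ∈ Finset.range m, (if j = 0 then 0 else F (j - 1)) := by
    rw [← Fin.sum_univ_eq_sum_range]
    refine Finset.sum_congr rfl fun i _ => ?_
    by_cases h : (i : ℕ) = 0
    · simp [hc, h]
    · have h1 : (i : ℕ) - 1 < m := lt_of_le_of_lt (Nat.sub_le _ _) i.isLt
      simp only [hc, hF, h, if_false, dif_pos h1]
      rw [← mul_assoc, mul_inv_cancel₀ hε.ne', one_mul]
  have hsum2 : ∑ i : Fin m, ∫ y in I i, f y ∂μ = ∑ j ∈ Finset.range m, F j := by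
    rw [← Fin.sum_univ_eq_sum_range]
    refine Finset.sum_congr rfl fun i _ => ?_
    simp only [hF, dif_pos i.isLt]
  obtain ⟨n, rfl⟩ : ∃ n, m = n + 1 := ⟨m - 1, (Nat.succ_pred_eq_of_pos hm).symm⟩
  have e1 : ∑ j ∈ Finset.range (n + 1), (if j = 0 then 0 else F (j - 1))
      = ∑ j ∈ Finset.range n, F j := by
    rw [Finset.sum_range_succ']
    simp
  have e2 : ∑ j ∈ Finset.range (n + 1), F j = (∑ j ∈ Finset.range n, F j) + F n :=
    Finset.sum_range_succ F n
  have := hFε n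
  rw [hIg, hIf, hsum1, hsum2, e1, e2]
  linarith
end
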